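/- arXiv:0904.1351 — 8 statements merged into one kernel-verified Lean document; each statement's English description precedes it below -/
import Mathlib

section
/- More generally, the partial transpose of |x⟩⟨x| with x = Σₖ λₖ vₖ ⊗ zₖ (Schmidt decomposition with at least two nonzero coefficients λₖ, Σ|λₖ|² = 1) is not positive semidefinite: for indices k ≠ l with λₖλ̄ₗ ≠ 0, the vector Ψ₋ = vₖ⊗zₗ − vₗ⊗zₖ or Ψ₊ = vₖ⊗zₗ + vₗ⊗zₖ witnesses a negative expectation value ∓2Re(λₖλ̄ₗ). -/
open Matrix
open scoped ComplexOrder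

open ComplexConjugate

/-- Partial transposition `(t ⊗ id)`: transpose the first tensor factor in the
Schmidt basis `{vₖ}` (whose coordinates we use). -/
def partialTranspose {n : ℕ} (ρ : Matrix (Fin n × Fin n) (Fin n × Fin n) ℂ) :
    Matrix (Fin n × Fin n) (Fin n × Fin n) ℂ :=
  fun p q => ρ (q.1, p.2) (p.1, q.2)

lemma quad_aux {n : ℕ} (lam : Fin n → ℂ) (k l : Fin n) (hkl : k ≠ l) (c : ℂ) :
    let x : Fin n × Fin n → ℂ := fun p => if p.1 = p.2 then lam p.1 else 0
    let ρ := partialTranspose (Matrix.vecMulVec x (star x))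
    let w : Fin n × Fin n → ℂ :=
      fun p => (if p = (k, l) then 1 else 0) + c * (if p = (l, k) then 1 else 0)
    star w ⬝ᵥ ρ.mulVec w = c * (lam l * conj (lam k)) + conj c * (lam k * conj (lam l)) := by
  intro x ρ w
  have hlk : l ≠ k := hkl.symm
  simp only [dotProduct, mulVec, ρ, w, partialTranspose, vecMulVec, Matrix.of_apply,
    Pi.star_apply, mul_add, mul_ite, ite_mul, add_mul, mul_one, mul_zero, zero_mul, one_mul,
    star_add, star_mul', apply_ite star, star_one, star_zero, Finset.sum_add_distrib,
    Finset.sum_ite_eq, Finset.sum_ite_eq', Finset.mem_univ, if_true]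
  simp [hkl, hlk, Finset.sum_ite_eq, x, mul_comm, mul_left_comm]
  ring

/-- For a pure state with Schmidt decomposition `x = ∑ₖ λₖ vₖ ⊗ zₖ` (in Schmidt
coordinates), if `k ≠ l` and `λₖ λ̄ₗ ≠ 0`, then the vectors
`Ψ∓ = vₖ⊗zₗ ∓ vₗ⊗zₖ` have expectation values `∓2 Re(λₖ λ̄ₗ)` in the partial
transpose of `|x⟩⟨x|`, and the partial transpose is not positive semidefinite. -/
theorem schmidt_rank_ge_two_partial_transpose_not_posSemidef
    {n : ℕ} (lam : Fin n → ℂ) (hnorm : ∑ i, ‖lam i‖ ^ 2 = 1)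
    (k l : Fin n) (hkl : k ≠ l) (hlam : lam k * conj (lam l) ≠ 0) :
    let x : Fin n × Fin n → ℂ := fun p => if p.1 = p.2 then lam p.1 else 0
    let ρ := partialTranspose (Matrix.vecMulVec x (star x))
    let Ψminus : Fin n × Fin n → ℂ :=
      fun p => (if p = (k, l) then 1 else 0) - (if p = (l, k) then 1 else 0)
    let Ψplus : Fin n × Fin n → ℂ :=
      fun p => (if p = (k, l) then 1 else 0) + (if p = (l, k) then 1 else 0)
    star Ψminus ⬝ᵥ ρ.mulVec Ψminus = -(((2 * (lam k * conj (lam l)).re : ℝ)) : ℂ) ∧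
    star Ψplus ⬝ᵥ ρ.mulVec Ψplus = (((2 * (lam k * conj (lam l)).re : ℝ)) : ℂ) ∧
    ¬ ρ.PosSemidef := by
  intro x ρ Ψminus Ψplus
  set a : ℂ := lam k * conj (lam l) with ha
  have hconj : lam l * conj (lam k) = conj a := by simp [ha, mul_comm]
  have hre : a + conj a = ((2 * a.re : ℝ) : ℂ) := by
    exact Complex.add_conj a
  have hminus : star Ψminus ⬝ᵥ ρ.mulVec Ψminus = -(((2 * a.re : ℝ)) : ℂ) := by
    have h := quad_aux lam k l hkl (-1)
    have hw : Ψminus = fun p =>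
        (if p = (k, l) then 1 else 0) + (-1 : ℂ) * (if p = (l, k) then 1 else 0) := by
      funext p; simp only [Ψminus, neg_one_mul, ← sub_eq_add_neg]
    rw [hw, h, hconj]
    simp only [map_neg, _root_.map_one, neg_one_mul, ← neg_add, ← ha]
    rw [add_comm, hre]
  have hplus : star Ψplus ⬝ᵥ ρ.mulVec Ψplus = (((2 * a.re : ℝ)) : ℂ) := by
    have h := quad_aux lam k l hkl 1
    have hw : Ψplus = fun p =>
        (if p = (k, l) then 1 else 0) + (1 : ℂ) * (if p = (l, k) then 1 else 0) := by
      funext p; simp [Ψplus]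
    rw [hw, h, hconj]
    simp only [_root_.map_one, one_mul, ← hre]
    ring
  refine ⟨hminus, hplus, ?_⟩
  intro hpsd
  have h := quad_aux lam k l hkl (-a)
  have hval : (-a) * (lam l * conj (lam k)) + conj (-a) * a = -((2 * Complex.normSq a : ℝ) : ℂ) := by
    rw [hconj, map_neg]
    have h1 := Complex.mul_conj a
    push_cast
    linear_combination (-2 : ℂ) * h1
  rw [hval] at h
  have hle := hpsd.dotProduct_mulVec_nonneg (fun p => (if p = (k, l) then 1 else 0) + (-a) * (if p = (l, k) then 1 else 0))
  rw [h] at hle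
  rw [le_neg, neg_zero] at hle
  have : (0:ℝ) < Complex.normSq a := Complex.normSq_pos.2 hlam
  have : ¬ (((2 * Complex.normSq a : ℝ) : ℂ) ≤ 0) := by
    rw [← Complex.ofReal_zero, Complex.real_le_real]
    nlinarith
  exact this hle
end

section
/- The map φ*(a) = Tr_H((a ⊗ 1) P_x), where P_x is the projection onto a unit vector x ∈ H⊗K, is co-completely positive: for all finite families aᵢ ∈ B(H), bᵢ ∈ B(K) and any vector w ∈ K, Σᵢⱼ (w, bᵢ* φ*(aⱼ* aᵢ) bⱼ w) ≥ 0. -/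
open Matrix
open scoped ComplexOrder

open Kronecker

/-- The partial trace over `H` of a matrix on `H ⊗ K`. -/
noncomputable def partialTraceH {m n : ℕ} (M : Matrix (Fin m × Fin n) (Fin m × Fin n) ℂ) :
    Matrix (Fin n) (Fin n) ℂ :=
  fun j l => ∑ i, M (i, j) (i, l)

private lemma conjTranspose_map_star {m n : ℕ} (A : Matrix (Fin m) (Fin n) ℂ) :
    (A.map star)ᴴ = Aᵀ := by
  ext i j
  simp [Matrix.conjTranspose_apply, Matrix.map_apply]

private lemma phi_formula {m n : ℕ} (x : Fin m × Fin n → ℂ)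
    (c : Matrix (Fin m) (Fin m) ℂ) :
    partialTraceH ((c ⊗ₖ (1 : Matrix (Fin n) (Fin n) ℂ)) * Matrix.vecMulVec x (star x)) =
      (Matrix.of fun p s => x (p, s))ᵀ * cᵀ * (Matrix.of fun p s => x (p, s)).map star := by
  ext j l
  simp only [partialTraceH, Matrix.mul_apply, Matrix.vecMulVec_apply,
    Matrix.kroneckerMap_apply, Matrix.transpose_apply, Matrix.map_apply, Matrix.of_apply,
    Fintype.sum_prod_type, Matrix.one_apply, Pi.star_apply]
  simp only [mul_ite, mul_zero, ite_mul, zero_mul, Finset.sum_ite_eq, Finset.mem_univ, if_true]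
  apply Finset.sum_congr rfl
  intro p _
  rw [Finset.sum_mul]
  apply Finset.sum_congr rfl
  intro q _
  ring

/-- The entanglement map `φ*(a) = Tr_H((a ⊗ 1) P_x)` of a pure state `P_x = |x⟩⟨x|`
is co-completely positive: `(w, ∑ᵢⱼ bᵢ* φ*(aⱼ* aᵢ) bⱼ w) ≥ 0` for all finite families
`aᵢ ∈ B(H)`, `bᵢ ∈ B(K)` and every vector `w ∈ K`. -/
theorem pure_state_entanglement_map_is_coCP {m n : ℕ}
    (x : Fin m × Fin n → ℂ) (hx : ∑ p, ‖x p‖ ^ 2 = 1)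
    (φstar : Matrix (Fin m) (Fin m) ℂ → Matrix (Fin n) (Fin n) ℂ)
    (hφ : ∀ a, φstar a =
      partialTraceH ((a ⊗ₖ (1 : Matrix (Fin n) (Fin n) ℂ)) * Matrix.vecMulVec x (star x)))
    (N : ℕ) (a : Fin N → Matrix (Fin m) (Fin m) ℂ) (b : Fin N → Matrix (Fin n) (Fin n) ℂ)
    (w : Fin n → ℂ) :
    0 ≤ star w ⬝ᵥ (∑ i, ∑ j, (b i)ᴴ * φstar ((a j)ᴴ * a i) * b j).mulVec w := by
  set X : Matrix (Fin m) (Fin n) ℂ := Matrix.of fun p s => x (p, s) with hX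
  set C : Matrix (Fin m) (Fin n) ℂ := ∑ i, (a i).map star * X.map star * b i with hC
  have key : (∑ i, ∑ j, (b i)ᴴ * φstar ((a j)ᴴ * a i) * b j) = Cᴴ * C := by
    rw [hC, Matrix.conjTranspose_sum, Matrix.sum_mul]
    apply Finset.sum_congr rfl
    intro i _
    rw [Matrix.mul_sum]
    apply Finset.sum_congr rfl
    intro j _
    rw [hφ, phi_formula]
    rw [Matrix.conjTranspose_mul, Matrix.conjTranspose_mul, conjTranspose_map_star,
      conjTranspose_map_star]
    have hc : ((a j)ᴴ * a i)ᵀ = (a i)ᵀ * (a j)ᴴᵀ := Matrix.transpose_mul _ _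
    have hc2 : (a j)ᴴᵀ = (a j).map star := by
      ext p q; simp [Matrix.conjTranspose_apply, Matrix.map_apply]
    rw [hc, hc2]
    simp only [← hX, Matrix.mul_assoc]
  rw [key]
  exact (Matrix.posSemidef_conjTranspose_mul_self C).dotProduct_mulVec_nonneg w
end

section
/- A hyponormal compact operator on a complex Hilbert space is normal; in particular every hyponormal operator on a finite-dimensional Hilbert space is normal. -/
open ContinuousLinearMap in
/-- Hyponormality is invariant under subtracting a scalar. -/
lemma hypo_shift {H : Type*} [NormedAddCommGroup H] [InnerProductSpace ℂ H] [CompleteSpace H]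
    (T : H →L[ℂ] H) (hhypo : ∀ ξ : H, ‖adjoint T ξ‖ ≤ ‖T ξ‖) (l : ℂ) (ξ : H) :
    ‖adjoint T ξ - (starRingEnd ℂ l) • ξ‖ ≤ ‖T ξ - l • ξ‖ := by
  have h1 : ‖T ξ - l • ξ‖ ^ 2
      = ‖T ξ‖ ^ 2 - 2 * Complex.reCLM (inner ℂ (T ξ) (l • ξ) : ℂ) + ‖l • ξ‖ ^ 2 := by
    exact_mod_cast norm_sub_sq (𝕜 := ℂ) (T ξ) (l • ξ)
  have h2 : ‖adjoint T ξ - (starRingEnd ℂ l) • ξ‖ ^ 2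
      = ‖adjoint T ξ‖ ^ 2 - 2 * Complex.reCLM (inner ℂ (adjoint T ξ) ((starRingEnd ℂ l) • ξ) : ℂ)
        + ‖(starRingEnd ℂ l) • ξ‖ ^ 2 := by
    exact_mod_cast norm_sub_sq (𝕜 := ℂ) (adjoint T ξ) ((starRingEnd ℂ l) • ξ)
  have hbase : (inner ℂ (adjoint T ξ) ξ : ℂ) = starRingEnd ℂ (inner ℂ (T ξ) ξ : ℂ) := by
    rw [adjoint_inner_left]
    exact (inner_conj_symm _ _).symm
  have key : (inner ℂ (adjoint T ξ) ((starRingEnd ℂ l) • ξ) : ℂ)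
      = starRingEnd ℂ (inner ℂ (T ξ) (l • ξ) : ℂ) := by
    rw [inner_smul_right, inner_smul_right, map_mul, hbase]
  have hre : Complex.reCLM (inner ℂ (adjoint T ξ) ((starRingEnd ℂ l) • ξ) : ℂ)
      = Complex.reCLM (inner ℂ (T ξ) (l • ξ) : ℂ) := by
    rw [key]; exact Complex.conj_re _
  have hnorm : ‖(starRingEnd ℂ l) • ξ‖ = ‖l • ξ‖ := by simp [norm_smul]
  have hT := hhypo ξ
  have hsq : ‖adjoint T ξ - (starRingEnd ℂ l) • ξ‖ ^ 2 ≤ ‖T ξ - l • ξ‖ ^ 2 := by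
    rw [h1, h2, hre, hnorm]
    nlinarith [norm_nonneg (T ξ), norm_nonneg (adjoint T ξ)]
  exact (pow_le_pow_iff_left₀ (norm_nonneg _) (norm_nonneg _) two_ne_zero).mp hsq

open ContinuousLinearMap in
/-- For a hyponormal operator, eigenvectors of `T` are eigenvectors of the adjoint. -/
lemma hypo_adjoint_eigen {H : Type*} [NormedAddCommGroup H] [InnerProductSpace ℂ H]
    [CompleteSpace H] (T : H →L[ℂ] H) (hhypo : ∀ ξ : H, ‖adjoint T ξ‖ ≤ ‖T ξ‖) (l : ℂ) (ξ : H)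
    (h : T ξ = l • ξ) : adjoint T ξ = (starRingEnd ℂ l) • ξ := by
  have := hypo_shift T hhypo l ξ
  rw [h, sub_self, norm_zero] at this
  have : ‖adjoint T ξ - (starRingEnd ℂ l) • ξ‖ = 0 := le_antisymm this (norm_nonneg _)
  rwa [norm_eq_zero, sub_eq_zero] at this

open ContinuousLinearMap in
lemma hypo_sq_le {H : Type*} [NormedAddCommGroup H] [InnerProductSpace ℂ H] [CompleteSpace H]
    (T : H →L[ℂ] H) (hhypo : ∀ ξ : H, ‖adjoint T ξ‖ ≤ ‖T ξ‖) (η : H) :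
    ‖T η‖ ^ 2 ≤ ‖T (T η)‖ * ‖η‖ := by
  have h1 : ‖T η‖ ^ 2 = Complex.reCLM (inner ℂ (adjoint T (T η)) η : ℂ) := by
    rw [adjoint_inner_left]
    exact_mod_cast (inner_self_eq_norm_sq (𝕜 := ℂ) (T η)).symm
  have h2 : Complex.reCLM (inner ℂ (adjoint T (T η)) η : ℂ) ≤ ‖(inner ℂ (adjoint T (T η)) η : ℂ)‖ :=
    Complex.re_le_norm _
  have h3 : ‖(inner ℂ (adjoint T (T η)) η : ℂ)‖ ≤ ‖adjoint T (T η)‖ * ‖η‖ := norm_inner_le_norm _ _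
  have h4 : ‖adjoint T (T η)‖ * ‖η‖ ≤ ‖T (T η)‖ * ‖η‖ :=
    mul_le_mul_of_nonneg_right (hhypo (T η)) (norm_nonneg _)
  linarith

open ContinuousLinearMap in
lemma hypo_norm_pow {H : Type*} [NormedAddCommGroup H] [InnerProductSpace ℂ H] [CompleteSpace H]
    [Nontrivial H]
    (T : H →L[ℂ] H) (hhypo : ∀ ξ : H, ‖adjoint T ξ‖ ≤ ‖T ξ‖) (n : ℕ) :
    ‖T ^ n‖ = ‖T‖ ^ n := by
  rcases eq_or_ne ‖T‖ 0 with h0 | h0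
  · have hT : T = 0 := norm_eq_zero.mp h0
    cases n with
    | zero => simpa using norm_one
    | succ n => simp [hT, pow_succ, h0]
  have hTpos : 0 < ‖T‖ := lt_of_le_of_ne (norm_nonneg _) (Ne.symm h0)
  have key : ∀ n : ℕ, ‖T ^ (n + 1)‖ ^ 2 ≤ ‖T ^ (n + 2)‖ * ‖T ^ n‖ := by
    intro n
    set m : ℝ := ‖T ^ (n + 2)‖ * ‖T ^ n‖ with hm
    have hm0 : 0 ≤ m := by positivity
    have hb : ∀ ξ : H, ‖(T ^ (n + 1)) ξ‖ ^ 2 ≤ m * ‖ξ‖ ^ 2 := by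
      intro ξ
      have e : ∀ k : ℕ, T ((T ^ k) ξ) = (T ^ (k + 1)) ξ := by
        intro k; rw [pow_succ']; rfl
      have h := hypo_sq_le T hhypo ((T ^ n) ξ)
      rw [e n, e (n + 1)] at h
      have b1 : ‖(T ^ (n + 2)) ξ‖ ≤ ‖T ^ (n + 2)‖ * ‖ξ‖ := (T ^ (n + 2)).le_opNorm ξ
      have b2 : ‖(T ^ n) ξ‖ ≤ ‖T ^ n‖ * ‖ξ‖ := (T ^ n).le_opNorm ξ
      calc ‖(T ^ (n + 1)) ξ‖ ^ 2 ≤ ‖(T ^ (n + 2)) ξ‖ * ‖(T ^ n) ξ‖ := h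
        _ ≤ (‖T ^ (n + 2)‖ * ‖ξ‖) * (‖T ^ n‖ * ‖ξ‖) :=
            mul_le_mul b1 b2 (norm_nonneg _) (by positivity)
        _ = m * ‖ξ‖ ^ 2 := by ring
    have hle : ‖T ^ (n + 1)‖ ≤ Real.sqrt m := by
      apply (T ^ (n + 1)).opNorm_le_bound (Real.sqrt_nonneg _)
      intro ξ
      have h := hb ξ
      have hsq : ‖(T ^ (n + 1)) ξ‖ ^ 2 ≤ (Real.sqrt m * ‖ξ‖) ^ 2 := by
        rw [mul_pow, Real.sq_sqrt hm0]; exact h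
      exact (pow_le_pow_iff_left₀ (norm_nonneg _) (by positivity) two_ne_zero).mp hsq
    have := pow_le_pow_left₀ (norm_nonneg _) hle 2
    rwa [Real.sq_sqrt hm0] at this
  have main : ∀ n : ℕ, ‖T ^ n‖ = ‖T‖ ^ n ∧ ‖T ^ (n + 1)‖ = ‖T‖ ^ (n + 1) := by
    intro n
    induction n with
    | zero => exact ⟨by simpa using norm_one, by simp⟩
    | succ k ih =>
      obtain ⟨hk, hk1⟩ := ih
      refine ⟨hk1, ?_⟩
      have hub : ‖T ^ (k + 2)‖ ≤ ‖T‖ ^ (k + 2) := norm_pow_le' T (by omega)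
      have hlb : ‖T‖ ^ (k + 2) ≤ ‖T ^ (k + 2)‖ := by
        have hkey := key k
        rw [hk, hk1] at hkey
        have hpow : (‖T‖ ^ (k + 1)) ^ 2 = ‖T‖ ^ (k + 2) * ‖T‖ ^ k := by ring
        rw [hpow] at hkey
        have hTk : (0:ℝ) < ‖T‖ ^ k := by positivity
        calc ‖T‖ ^ (k + 2) = (‖T‖ ^ (k + 2) * ‖T‖ ^ k) / ‖T‖ ^ k := by field_simp
          _ ≤ (‖T ^ (k + 2)‖ * ‖T‖ ^ k) / ‖T‖ ^ k := by
              gcongr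
          _ = ‖T ^ (k + 2)‖ := by field_simp
      linarith
  exact (main n).1

open ContinuousLinearMap in
lemma hypo_spectralRadius {H : Type*} [NormedAddCommGroup H] [InnerProductSpace ℂ H]
    [CompleteSpace H] [Nontrivial H]
    (T : H →L[ℂ] H) (hhypo : ∀ ξ : H, ‖adjoint T ξ‖ ≤ ‖T ξ‖) :
    spectralRadius ℂ T = (‖T‖₊ : ENNReal) := by
  have hgel := spectrum.pow_nnnorm_pow_one_div_tendsto_nhds_spectralRadius T
  have heq : ∀ n : ℕ, 1 ≤ n → ((‖T ^ n‖₊ : ENNReal) ^ (1 / (n:ℝ))) = (‖T‖₊ : ENNReal) := by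
    intro n hn
    have h : ‖T ^ n‖₊ = ‖T‖₊ ^ n := by
      ext; simpa using hypo_norm_pow T hhypo n
    rw [h]
    rw [ENNReal.coe_pow, ← ENNReal.rpow_natCast, ← ENNReal.rpow_mul]
    rw [mul_one_div, div_self (show (n:ℝ) ≠ 0 by positivity), ENNReal.rpow_one]
  have : Filter.Tendsto (fun _ : ℕ => (‖T‖₊ : ENNReal)) Filter.atTop (nhds (‖T‖₊ : ENNReal)) :=
    tendsto_const_nhds
  have hev : Filter.Tendsto (fun n : ℕ => ((‖T ^ n‖₊ : ENNReal) ^ (1 / (n:ℝ))))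
      Filter.atTop (nhds (‖T‖₊ : ENNReal)) := by
    apply Filter.Tendsto.congr' ?_ this
    filter_upwards [Filter.eventually_ge_atTop 1] with n hn
    exact (heq n hn).symm
  exact tendsto_nhds_unique hgel hev

-- norm-pow lemma assumed available (from chunk 2); here assume `hr` as hypothesis for testing
open ContinuousLinearMap in
lemma exists_eigen_of_compact_hypo {H : Type*} [NormedAddCommGroup H] [InnerProductSpace ℂ H]
    [CompleteSpace H] (S : H →L[ℂ] H) (hcompact : IsCompactOperator S)
    (hhypo : ∀ ξ : H, ‖adjoint S ξ‖ ≤ ‖S ξ‖) (hS : S ≠ 0) :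
    ∃ (l : ℂ) (ξ : H), l ≠ 0 ∧ ‖ξ‖ = 1 ∧ S ξ = l • ξ := by
  haveI : Nontrivial H := by
    obtain ⟨x, hx⟩ : ∃ x, S x ≠ 0 := by
      by_contra h
      push_neg at h
      exact hS (ContinuousLinearMap.ext fun x => by simp [h x])
    exact ⟨x, 0, fun h => hx (by simp [h])⟩
  haveI : Nontrivial (H →L[ℂ] H) := nontrivial_of_ne S 0 hS
  have hr : spectralRadius ℂ S = (‖S‖₊ : ENNReal) := hypo_spectralRadius S hhypo
  obtain ⟨l, hlmem, hlnorm⟩ := spectrum.exists_nnnorm_eq_spectralRadius S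
  rw [hr] at hlnorm
  have hlS : ‖l‖ = ‖S‖ := by
    have h := ENNReal.coe_inj.mp hlnorm
    simpa using congrArg NNReal.toReal h
  have hSpos : 0 < ‖S‖ := norm_pos_iff.mpr hS
  have hl0 : l ≠ 0 := by
    intro h
    rw [h] at hlS; simp at hlS; exact hSpos.ne' hlS.symm
  have hlpos : 0 < ‖l‖ := norm_pos_iff.mpr hl0
  by_cases hbb : ∃ c > (0:ℝ), ∀ ξ : H, c * ‖ξ‖ ≤ ‖S ξ - l • ξ‖
  · -- bounded below: contradiction
    exfalso
    obtain ⟨c, hc, hbd⟩ := hbb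
    set A : H →L[ℂ] H := algebraMap ℂ (H →L[ℂ] H) l - S with hA
    have hAapp : ∀ ξ : H, A ξ = l • ξ - S ξ := by
      intro ξ
      simp [hA, Algebra.algebraMap_eq_smul_one]
    have hbdA : ∀ ξ : H, c * ‖ξ‖ ≤ ‖A ξ‖ := by
      intro ξ; rw [hAapp, norm_sub_rev]; exact hbd ξ
    have hbdA' : ∀ ξ : H, ‖ξ‖ ≤ (⟨c, hc.le⟩ : NNReal)⁻¹ * ‖A ξ‖ := by
      intro ξ
      have h := hbdA ξ
      push_cast
      rw [inv_mul_eq_div, le_div_iff₀ hc, mul_comm]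
      exact h
    have hanti := A.antilipschitz_of_bound hbdA'
    have hinj : Function.Injective A := hanti.injective
    have hclosed : IsClosed (Set.range A) := hanti.isClosed_range A.uniformContinuous
    by_cases htop : LinearMap.range (A : H →ₗ[ℂ] H) = ⊤
    · have hsurj : Function.Surjective A := LinearMap.range_eq_top.mp htop
      have : IsUnit A := ContinuousLinearMap.isUnit_iff_bijective.mpr ⟨hinj, hsurj⟩
      exact (spectrum.mem_iff.mp hlmem) this
    · set K : Submodule ℂ H := LinearMap.range (A : H →ₗ[ℂ] H) with hK
      have hKclosed : IsClosed (K : Set H) := by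
        have : (K : Set H) = Set.range A := by
          rw [hK]; exact LinearMap.coe_range _
        rw [this]; exact hclosed
      haveI : CompleteSpace K := hKclosed.completeSpace_coe
      have hKorth : Kᗮ ≠ ⊥ := by
        rw [Ne, Submodule.orthogonal_eq_bot_iff]
        exact htop
      obtain ⟨v, hvK, hv0⟩ := Submodule.ne_bot_iff _ |>.mp hKorth
      -- μ := l + ε l with ε = c/(4‖l‖)
      set ε : ℝ := c / (4 * ‖l‖) with hε
      have hεpos : 0 < ε := div_pos hc (by linarith)
      set μ : ℂ := l + (ε : ℂ) * l with hμdef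
      have hμl : ‖μ - l‖ = c / 4 := by
        have : μ - l = (ε : ℂ) * l := by ring
        rw [this, norm_mul, Complex.norm_real, Real.norm_eq_abs, abs_of_pos hεpos, hε]
        rw [div_mul_eq_mul_div, mul_comm, ← div_mul_eq_mul_div]
        rw [show (4 : ℝ) * ‖l‖ = ‖l‖ * 4 by ring, ← div_div, div_self hlpos.ne']
        ring
      have hμnorm : ‖l‖ < ‖μ‖ := by
        have h1 : μ = (1 + (ε:ℂ)) * l := by ring
        rw [h1, norm_mul]
        have : (1:ℝ) < ‖(1 + (ε:ℂ))‖ := by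
          have : (1 + (ε:ℂ)) = ((1 + ε : ℝ) : ℂ) := by push_cast; ring
          rw [this, Complex.norm_real, Real.norm_eq_abs, abs_of_pos (by linarith)]
          linarith
        nlinarith [norm_pos_iff.mpr hl0]
      have hμres : μ ∈ resolventSet ℂ S := by
        apply spectrum.mem_resolventSet_of_spectralRadius_lt
        rw [hr]
        have h : ‖S‖ < ‖μ‖ := hlS ▸ hμnorm
        exact_mod_cast h
      have hμunit : IsUnit (algebraMap ℂ (H →L[ℂ] H) μ - S) := hμres
      obtain ⟨u, hu⟩ := hμunit
      set B : H →L[ℂ] H := algebraMap ℂ (H →L[ℂ] H) μ - S with hB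
      set w : H := (↑u⁻¹ : H →L[ℂ] H) v with hw
      have hBw : B w = v := by
        have : (↑u : H →L[ℂ] H) ((↑u⁻¹ : H →L[ℂ] H) v) = ((↑u * ↑u⁻¹ : H →L[ℂ] H)) v := rfl
        rw [hw, ← hu, this, u.mul_inv]
        exact ContinuousLinearMap.one_apply v
      have hBA : ∀ ξ : H, B ξ = A ξ + (μ - l) • ξ := by
        intro ξ
        simp only [hB, hA, Algebra.algebraMap_eq_smul_one, ContinuousLinearMap.sub_apply,
          ContinuousLinearMap.smul_apply, ContinuousLinearMap.one_apply]
        rw [sub_smul]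
        abel
      -- bound on ‖w‖
      have hwbound : c / 2 * ‖w‖ ≤ ‖v‖ := by
        have h1 : c * ‖w‖ ≤ ‖A w‖ := hbdA w
        have h2 : A w = B w - (μ - l) • w := by rw [hBA]; abel
        have h3 : ‖A w‖ ≤ ‖v‖ + c / 4 * ‖w‖ := by
          rw [h2, hBw]
          calc ‖v - (μ - l) • w‖ ≤ ‖v‖ + ‖(μ - l) • w‖ := norm_sub_le _ _
            _ = ‖v‖ + c / 4 * ‖w‖ := by rw [norm_smul, hμl]
        nlinarith [norm_nonneg w]
      -- inner ℂ product contradiction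
      have hAwK : A w ∈ K := LinearMap.mem_range_self (A : H →ₗ[ℂ] H) w
      have hinner0 : (inner ℂ (A w) v : ℂ) = 0 := (Submodule.mem_orthogonal K v).mp hvK _ hAwK
      have hvv : (inner ℂ v v : ℂ) = starRingEnd ℂ (μ - l) * inner ℂ w v := by
        have : v = A w + (μ - l) • w := by rw [← hBA, hBw]
        nth_rewrite 1 [this]
        rw [inner_add_left, hinner0, inner_smul_left, zero_add]
      have hnormvv : ‖v‖ ^ 2 ≤ c / 4 * (‖w‖ * ‖v‖) := by
        have h1 : ‖(inner ℂ v v : ℂ)‖ = ‖v‖ ^ 2 := by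
          rw [inner_self_eq_norm_sq_to_K]
          push_cast
          simp [norm_pow]
        have h2 : ‖(inner ℂ v v : ℂ)‖ ≤ ‖μ - l‖ * (‖w‖ * ‖v‖) := by
          rw [hvv, norm_mul, RingHomIsometric.norm_map]
          gcongr
          exact norm_inner_le_norm w v
        rw [hμl] at h2
        linarith [h1 ▸ h2]
      have hvpos : 0 < ‖v‖ := norm_pos_iff.mpr hv0
      nlinarith [norm_nonneg w]
  · -- not bounded below: approximate eigenvector, use compactness
    push_neg at hbb
    have hseq : ∀ n : ℕ, ∃ ξ : H, ‖ξ‖ = 1 ∧ ‖S ξ - l • ξ‖ < 1 / (n + 1) := by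
      intro n
      obtain ⟨ξ', hξ'⟩ := hbb (1 / (n + 1)) (by positivity)
      have hξ'0 : ξ' ≠ 0 := by
        intro h
        rw [h] at hξ'
        simp at hξ'
      have hn : (0:ℝ) < ‖ξ'‖ := norm_pos_iff.mpr hξ'0
      refine ⟨((‖ξ'‖⁻¹ : ℝ) : ℂ) • ξ', ?_, ?_⟩
      · rw [norm_smul]
        simp only [Complex.norm_real, Real.norm_eq_abs]
        rw [abs_of_pos (inv_pos.mpr hn),
          inv_mul_cancel₀ (norm_ne_zero_iff.mpr hξ'0)]
      · have heq : S (((‖ξ'‖⁻¹ : ℝ) : ℂ) • ξ') - l • (((‖ξ'‖⁻¹ : ℝ) : ℂ) • ξ')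
            = ((‖ξ'‖⁻¹ : ℝ) : ℂ) • (S ξ' - l • ξ') := by
          rw [map_smul, smul_sub, smul_comm]
        rw [heq, norm_smul]
        simp only [Complex.norm_real, Real.norm_eq_abs]
        rw [abs_of_pos (inv_pos.mpr hn), inv_mul_lt_iff₀ hn]
        calc ‖S ξ' - l • ξ'‖ < 1 / (↑n + 1) * ‖ξ'‖ := hξ'
          _ = ‖ξ'‖ * (1 / (↑n + 1)) := by ring
    choose ξ hξnorm hξapprox using hseq
    have hKcpt : IsCompact (closure (⇑(S : H →ₗ[ℂ] H) '' Metric.closedBall 0 1)) :=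
      IsCompactOperator.isCompact_closure_image_closedBall (𝕜₁ := ℂ)
        (f := (S : H →ₗ[ℂ] H)) hcompact 1
    have hmem : ∀ n : ℕ, S (ξ n) ∈ closure (⇑(S : H →ₗ[ℂ] H) '' Metric.closedBall 0 1) := by
      intro n
      apply subset_closure
      exact Set.mem_image_of_mem _ (by simp [Metric.mem_closedBall, dist_zero_right, hξnorm n])
    obtain ⟨w, hwmem, φ, hφmono, hφtend⟩ := hKcpt.tendsto_subseq hmem
    have hdiff : Filter.Tendsto (fun n => S (ξ (φ n)) - l • ξ (φ n)) Filter.atTop (nhds 0) := by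
      refine squeeze_zero_norm (fun n => ?_) tendsto_one_div_add_atTop_nhds_zero_nat
      calc ‖S (ξ (φ n)) - l • ξ (φ n)‖ ≤ 1 / (φ n + 1) := (hξapprox (φ n)).le
          _ ≤ 1 / (n + 1) := by
              apply one_div_le_one_div_of_le (by positivity)
              have h : n ≤ φ n := hφmono.le_apply
              have h2 : (n:ℝ) ≤ (φ n : ℝ) := Nat.cast_le.mpr h
              linarith
    have hlξ : Filter.Tendsto (fun n => l • ξ (φ n)) Filter.atTop (nhds w) := by
      have h := hφtend.sub hdiff
      simpa using h
    have hξtend : Filter.Tendsto (fun n => ξ (φ n)) Filter.atTop (nhds (l⁻¹ • w)) := by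
      have h := hlξ.const_smul l⁻¹
      simpa [smul_smul, inv_mul_cancel₀ hl0] using h
    refine ⟨l, l⁻¹ • w, hl0, ?_, ?_⟩
    · have h1 := hξtend.norm
      have h2 : Filter.Tendsto (fun n : ℕ => ‖ξ (φ n)‖) Filter.atTop (nhds 1) := by
        simp only [hξnorm]
        exact tendsto_const_nhds
      exact tendsto_nhds_unique h1 h2
    · have h1 : Filter.Tendsto (fun n => S (ξ (φ n))) Filter.atTop (nhds (S (l⁻¹ • w))) :=
        (S.continuous.tendsto _).comp hξtend
      have h2 := tendsto_nhds_unique h1 hφtend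
      rw [h2, smul_inv_smul₀ hl0]

set_option maxHeartbeats 2000000 in
open ContinuousLinearMap in
/-- A hyponormal compact operator on a complex Hilbert space is normal
(in particular every hyponormal operator on a finite-dimensional space is normal). -/
theorem hyponormal_compact_is_normal
    {H : Type*} [NormedAddCommGroup H] [InnerProductSpace ℂ H] [CompleteSpace H]
    (T : H →L[ℂ] H) (hcompact : IsCompactOperator T)
    (hhypo : ∀ ξ : H, ‖ContinuousLinearMap.adjoint T ξ‖ ≤ ‖T ξ‖) :
    (ContinuousLinearMap.adjoint T).comp T = T.comp (ContinuousLinearMap.adjoint T) := by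
  classical
  set E : Set H := {ξ : H | ∃ μ : ℂ, T ξ = μ • ξ} with hE
  set M : Submodule ℂ H := (Submodule.span ℂ E).topologicalClosure with hM
  have hMclosed : IsClosed (M : Set H) := Submodule.isClosed_topologicalClosure _
  -- T and adjoint T map E into E
  have hTE : ∀ ξ ∈ E, T ξ ∈ E := by
    rintro ξ ⟨μ, hμ⟩
    exact ⟨μ, by rw [hμ, map_smul, hμ]⟩
  have hT'E : ∀ ξ ∈ E, adjoint T ξ ∈ E := by
    rintro ξ ⟨μ, hμ⟩
    have h := hypo_adjoint_eigen T hhypo μ ξ hμ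
    refine ⟨μ, ?_⟩
    rw [h, map_smul, hμ, smul_comm]
  -- invariance of M
  have hinv : ∀ (A : H →L[ℂ] H), (∀ ξ ∈ E, A ξ ∈ E) → ∀ x ∈ M, A x ∈ M := by
    intro A hAE x hx
    have h1 : Submodule.span ℂ E ≤ Submodule.comap (A : H →ₗ[ℂ] H) M := by
      rw [Submodule.span_le]
      intro ξ hξ
      have : A ξ ∈ E := hAE ξ hξ
      exact Submodule.le_topologicalClosure _ (Submodule.subset_span this)
    have h2 : M ≤ Submodule.comap (A : H →ₗ[ℂ] H) M := by
      exact Submodule.topologicalClosure_minimal _ h1 (hMclosed.preimage A.continuous)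
    exact h2 hx
  have hTM : ∀ x ∈ M, T x ∈ M := hinv T hTE
  have hT'M : ∀ x ∈ M, adjoint T x ∈ M := hinv (adjoint T) hT'E
  -- orthogonal complement invariance
  have hTMp : ∀ w ∈ Mᗮ, T w ∈ Mᗮ := by
    intro w hw
    rw [Submodule.mem_orthogonal]
    intro u hu
    rw [← adjoint_inner_left]
    exact (Submodule.mem_orthogonal M w).mp hw _ (hT'M u hu)
  have hT'Mp : ∀ w ∈ Mᗮ, adjoint T w ∈ Mᗮ := by
    intro w hw
    rw [Submodule.mem_orthogonal]
    intro u hu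
    rw [adjoint_inner_right]
    exact (Submodule.mem_orthogonal M w).mp hw _ (hTM u hu)
  haveI : CompleteSpace Mᗮ := (Submodule.isClosed_orthogonal M).completeSpace_coe
  set P : H →L[ℂ] H := Mᗮ.subtypeL.comp (Submodule.orthogonalProjectionOnto Mᗮ) with hP
  have hPmem : ∀ x : H, P x ∈ Mᗮ := fun x => (Submodule.orthogonalProjectionOnto Mᗮ x).2
  have hPfix : ∀ w ∈ Mᗮ, P w = w := by
    intro w hw
    have := Submodule.orthogonalProjectionOnto_mem_subspace_eq_self (K := Mᗮ) ⟨w, hw⟩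
    simp only [hP, ContinuousLinearMap.comp_apply]
    rw [show Submodule.orthogonalProjectionOnto Mᗮ w = Submodule.orthogonalProjectionOnto Mᗮ (⟨w, hw⟩ : Mᗮ) from rfl, this]
    rfl
  have hPsa : adjoint P = P := by
    have := isSelfAdjoint_starProjection Mᗮ
    rwa [IsSelfAdjoint, star_eq_adjoint] at this
  set S : H →L[ℂ] H := P.comp (T.comp P) with hS
  have hSapp : ∀ x : H, S x = T (P x) := by
    intro x
    have h1 : T (P x) ∈ Mᗮ := hTMp _ (hPmem x)
    simp only [hS, ContinuousLinearMap.comp_apply]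
    exact hPfix _ h1
  have hS' : adjoint S = P.comp ((adjoint T).comp P) := by
    rw [hS, adjoint_comp, adjoint_comp, hPsa]
    rfl
  have hS'app : ∀ x : H, adjoint S x = adjoint T (P x) := by
    intro x
    have h1 : adjoint T (P x) ∈ Mᗮ := hT'Mp _ (hPmem x)
    rw [hS']
    simp only [ContinuousLinearMap.comp_apply]
    exact hPfix _ h1
  have hShypo : ∀ x : H, ‖adjoint S x‖ ≤ ‖S x‖ := by
    intro x
    rw [hSapp, hS'app]
    exact hhypo (P x)
  have hScompact : IsCompactOperator S := by
    have h1 : IsCompactOperator (⇑P ∘ ⇑T) := hcompact.clm_comp (g := P)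
    have h2 : IsCompactOperator ((⇑P ∘ ⇑T) ∘ ⇑P) := h1.comp_clm (g := P)
    have : ⇑S = (⇑P ∘ ⇑T) ∘ ⇑P := by
      ext x; simp [hS, ContinuousLinearMap.comp_apply, Function.comp]
    rwa [this]
  -- S has no nonzero eigenvalue, hence S = 0
  have hS0 : S = 0 := by
    by_contra h
    obtain ⟨l, ξ, hl0, hξ1, hξeig⟩ := exists_eigen_of_compact_hypo S hScompact hShypo h
    have hξMp : ξ ∈ Mᗮ := by
      have h1 : S ξ ∈ Mᗮ := by rw [hSapp]; exact hTMp _ (hPmem ξ)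
      have h2 : l • ξ ∈ Mᗮ := hξeig ▸ h1
      have := Mᗮ.smul_mem l⁻¹ h2
      rwa [smul_smul, inv_mul_cancel₀ hl0, one_smul] at this
    have hTξ : T ξ = l • ξ := by
      rw [← hξeig, hSapp, hPfix _ hξMp]
    have hξM : ξ ∈ M := Submodule.le_topologicalClosure _ (Submodule.subset_span ⟨l, hTξ⟩)
    have : (inner ℂ ξ ξ : ℂ) = 0 := (Submodule.mem_orthogonal M ξ).mp hξMp ξ hξM
    rw [inner_self_eq_zero] at this
    rw [this, norm_zero] at hξ1
    norm_num at hξ1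
  have hTw0 : ∀ w ∈ Mᗮ, T w = 0 := by
    intro w hw
    have : S w = T w := by rw [hSapp, hPfix _ hw]
    rw [← this, hS0]
    rfl
  have hT'w0 : ∀ w ∈ Mᗮ, adjoint T w = 0 := by
    intro w hw
    have h := hhypo w
    rw [hTw0 w hw, norm_zero] at h
    exact norm_eq_zero.mp (le_antisymm h (norm_nonneg _))
  -- the commutator vanishes
  set g : H →L[ℂ] H := (adjoint T).comp T - T.comp (adjoint T) with hg
  have hgE : ∀ ξ ∈ E, g ξ = 0 := by
    rintro ξ ⟨μ, hμ⟩
    have h' := hypo_adjoint_eigen T hhypo μ ξ hμ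
    simp only [hg, ContinuousLinearMap.sub_apply, ContinuousLinearMap.comp_apply]
    rw [hμ, h', map_smul, map_smul, hμ, h', smul_smul, smul_smul, mul_comm, sub_self]
  have hgM : ∀ x ∈ M, g x = 0 := by
    intro x hx
    have h1 : Submodule.span ℂ E ≤ LinearMap.ker (g : H →ₗ[ℂ] H) := by
      rw [Submodule.span_le]
      intro ξ hξ
      exact LinearMap.mem_ker.mpr (hgE ξ hξ)
    have h2 : M ≤ LinearMap.ker (g : H →ₗ[ℂ] H) := by
      exact Submodule.topologicalClosure_minimal _ h1 (ContinuousLinearMap.isClosed_ker g)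
    exact LinearMap.mem_ker.mp (h2 hx)
  have hgMp : ∀ w ∈ Mᗮ, g w = 0 := by
    intro w hw
    simp only [hg, ContinuousLinearMap.sub_apply, ContinuousLinearMap.comp_apply]
    rw [hTw0 w hw, hT'w0 w hw, map_zero, map_zero, sub_self]
  haveI : CompleteSpace M := hMclosed.completeSpace_coe
  ext x
  have hdecomp : x = (Submodule.orthogonalProjectionOnto M x : H) + (x - Submodule.orthogonalProjectionOnto M x) := by abel
  have h1 : g x = 0 := by
    conv_lhs => rw [hdecomp]
    rw [map_add, hgM _ (Submodule.orthogonalProjectionOnto M x).2,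
      hgMp (x - Submodule.orthogonalProjectionOnto M x) (Submodule.sub_starProjection_mem_orthogonal (K := M) x), add_zero]
  have := sub_eq_zero.mp (by simpa [hg] using h1)
  simpa using this
end

section
/- If a₁, a₂ are invertible d×d complex matrices such that both the block matrix [[a₁*a₁, a₁*a₂],[a₂*a₁, a₂*a₂]] and its block transpose [[a₁*a₁, a₂*a₁],[a₁*a₂, a₂*a₂]] are positive semidefinite, then a₂a₁⁻¹ is a normal matrix. -/
open Matrix
open scoped ComplexOrder

open Matrix

lemma psd_trace_zero_aux {n : Type*} [Fintype n] [DecidableEq n] {M : Matrix n n ℂ}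
    (hM : M.PosSemidef) (h : M.trace = 0) : M = 0 := by
  obtain ⟨B, rfl⟩ : ∃ B : Matrix n n ℂ, M = Bᴴ * B := by
    open scoped MatrixOrder in exact CStarAlgebra.nonneg_iff_eq_star_mul_self.mp hM.nonneg
  rw [Matrix.conjTranspose_mul_self_eq_zero]
  have h' : ∑ i, ∑ j, star (B j i) * B j i = 0 := by
    simpa [Matrix.trace, Matrix.diag, Matrix.mul_apply, Matrix.conjTranspose_apply] using h
  ext i j
  have h1 := (Finset.sum_eq_zero_iff_of_nonneg (fun i _ =>
      Finset.sum_nonneg fun j _ => star_mul_self_nonneg (B j i))).mp h' j (Finset.mem_univ j)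
  have h2 := (Finset.sum_eq_zero_iff_of_nonneg (fun k _ =>
      star_mul_self_nonneg (B k j))).mp h1 i (Finset.mem_univ i)
  rcases mul_eq_zero.mp h2 with h3 | h3
  · simpa using star_eq_zero.mp h3
  · simpa using h3

/-- If `a₁, a₂` are invertible and both the block matrix
`[[a₁*a₁, a₁*a₂],[a₂*a₁, a₂*a₂]]` and its block transpose are positive semidefinite,
then `a₂ a₁⁻¹` is normal. -/
theorem stormer_condition_implies_normal {d : ℕ}
    (a₁ a₂ : Matrix (Fin d) (Fin d) ℂ) (h₁ : IsUnit a₁) (h₂ : IsUnit a₂)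
    (hpos : (Matrix.fromBlocks (a₁ᴴ * a₁) (a₁ᴴ * a₂) (a₂ᴴ * a₁) (a₂ᴴ * a₂)).PosSemidef)
    (hpos' : (Matrix.fromBlocks (a₁ᴴ * a₁) (a₂ᴴ * a₁) (a₁ᴴ * a₂) (a₂ᴴ * a₂)).PosSemidef) :
    (a₂ * a₁⁻¹)ᴴ * (a₂ * a₁⁻¹) = (a₂ * a₁⁻¹) * (a₂ * a₁⁻¹)ᴴ := by
  have hd₁ : IsUnit a₁.det := (Matrix.isUnit_iff_isUnit_det a₁).mp h₁
  have hd₂ : IsUnit a₂.det := (Matrix.isUnit_iff_isUnit_det a₂).mp h₂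
  have hinv₁ : a₁⁻¹ * a₁ = 1 := Matrix.nonsing_inv_mul a₁ hd₁
  have hinv₁' : a₁ * a₁⁻¹ = 1 := Matrix.mul_nonsing_inv a₁ hd₁
  have hinv₂ : a₂⁻¹ * a₂ = 1 := Matrix.nonsing_inv_mul a₂ hd₂
  have hinv₂' : a₂ * a₂⁻¹ = 1 := Matrix.mul_nonsing_inv a₂ hd₂
  set b := a₂ * a₁⁻¹ with hb
  set K := a₁⁻¹ᴴ * (a₂ᴴ * a₁) * a₂⁻¹ with hK
  -- conjugate hpos' by the block-diagonal matrix
  have key : (Matrix.fromBlocks (1 : Matrix (Fin d) (Fin d) ℂ) K Kᴴ 1).PosSemidef := by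
    have := hpos'.conjTranspose_mul_mul_same (Matrix.fromBlocks a₁⁻¹ 0 0 a₂⁻¹)
    have heq : (Matrix.fromBlocks a₁⁻¹ 0 0 a₂⁻¹)ᴴ *
        Matrix.fromBlocks (a₁ᴴ * a₁) (a₂ᴴ * a₁) (a₁ᴴ * a₂) (a₂ᴴ * a₂) *
        Matrix.fromBlocks a₁⁻¹ 0 0 a₂⁻¹ =
        Matrix.fromBlocks 1 K Kᴴ 1 := by
      have e1 : a₁⁻¹ᴴ * (a₁ᴴ * a₁) * a₁⁻¹ = 1 := by
        calc a₁⁻¹ᴴ * (a₁ᴴ * a₁) * a₁⁻¹ = (a₁ * a₁⁻¹)ᴴ * (a₁ * a₁⁻¹) := by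
              simp [Matrix.conjTranspose_mul, Matrix.mul_assoc]
        _ = 1 := by rw [hinv₁']; simp
      have e3 : a₂⁻¹ᴴ * (a₁ᴴ * a₂) * a₁⁻¹ = Kᴴ := by
        rw [hK]; simp [Matrix.conjTranspose_mul, Matrix.mul_assoc]
      have e4 : a₂⁻¹ᴴ * (a₂ᴴ * a₂) * a₂⁻¹ = 1 := by
        calc a₂⁻¹ᴴ * (a₂ᴴ * a₂) * a₂⁻¹ = (a₂ * a₂⁻¹)ᴴ * (a₂ * a₂⁻¹) := by
              simp [Matrix.conjTranspose_mul, Matrix.mul_assoc]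
        _ = 1 := by rw [hinv₂']; simp
      rw [Matrix.fromBlocks_conjTranspose, Matrix.fromBlocks_multiply,
        Matrix.fromBlocks_multiply]
      simp only [Matrix.conjTranspose_zero, Matrix.mul_zero, Matrix.zero_mul, add_zero,
        zero_add]
      rw [e1, e3, e4]
    rwa [heq] at this
  -- Schur complement: 1 - KᴴK is PSD
  have hone : (1 : Matrix (Fin d) (Fin d) ℂ).PosDef := Matrix.PosDef.one
  haveI : Invertible (1 : Matrix (Fin d) (Fin d) ℂ) := invertibleOne
  have hschur : ((1 : Matrix (Fin d) (Fin d) ℂ) - Kᴴ * K).PosSemidef := by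
    have := (Matrix.PosDef.fromBlocks₁₁ K 1 hone).mp key
    simpa using this
  -- conjugate by b
  have hKb : K * b = bᴴ := by
    rw [hK, hb]
    calc a₁⁻¹ᴴ * (a₂ᴴ * a₁) * a₂⁻¹ * (a₂ * a₁⁻¹)
        = a₁⁻¹ᴴ * (a₂ᴴ * (a₁ * ((a₂⁻¹ * a₂) * a₁⁻¹))) := by
          simp [Matrix.mul_assoc]
      _ = a₁⁻¹ᴴ * a₂ᴴ := by rw [hinv₂, Matrix.one_mul, hinv₁', Matrix.mul_one]
      _ = (a₂ * a₁⁻¹)ᴴ := by rw [Matrix.conjTranspose_mul]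
  have hD : (bᴴ * b - b * bᴴ).PosSemidef := by
    have := hschur.conjTranspose_mul_mul_same b
    have heq : bᴴ * (1 - Kᴴ * K) * b = bᴴ * b - b * bᴴ := by
      have : bᴴ * (Kᴴ * K) * b = (K * b)ᴴ * (K * b) := by
        simp [Matrix.conjTranspose_mul, Matrix.mul_assoc]
      rw [Matrix.mul_sub, Matrix.sub_mul, Matrix.mul_one, this, hKb,
        Matrix.conjTranspose_conjTranspose]
    rwa [heq] at this
  have htr : (bᴴ * b - b * bᴴ).trace = 0 := by
    rw [Matrix.trace_sub, Matrix.trace_mul_comm, sub_self]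
  have := psd_trace_zero_aux hD htr
  rw [sub_eq_zero] at this
  exact this
end

section
/- Under the same hypotheses (both [[a₁*a₁, a₁*a₂],[a₂*a₁, a₂*a₂]] and its block transpose positive semidefinite, a₁ invertible), there exist complex numbers λᵢ and an orthonormal basis {eᵢ} such that a₂ = Σᵢ λᵢ |eᵢ⟩⟨a₁*eᵢ|. -/
open Matrix
open scoped ComplexOrder

open Matrix


lemma trace_zero_of_psd {d : ℕ} {c : Matrix (Fin d) (Fin d) ℂ}
    (hc : c.PosSemidef) (ht : c.trace = 0) : c = 0 := by
  obtain ⟨B, rfl⟩ : ∃ B : Matrix (Fin d) (Fin d) ℂ, c = Bᴴ * B :=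
    ⟨0, by simpa using (Matrix.PosSemidef.trace_eq_zero_iff hc).mp ht⟩
  suffices hB : B = 0 by simp [hB]
  have h : ∀ j ∈ Finset.univ, ∀ i ∈ Finset.univ, star (B i j) * B i j = 0 := by
    have hnn : ∀ j ∈ (Finset.univ : Finset (Fin d)), 0 ≤ ∑ i, star (B i j) * B i j :=
      fun j _ => Finset.sum_nonneg fun i _ => star_mul_self_nonneg _
    have := (Finset.sum_eq_zero_iff_of_nonneg hnn).mp ?_
    · intro j hj i hi
      exact (Finset.sum_eq_zero_iff_of_nonneg (fun i _ => star_mul_self_nonneg _)).mp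
        (this j hj) i hi
    · simpa [Matrix.trace, Matrix.diag, Matrix.mul_apply, Matrix.conjTranspose_apply] using ht
  ext i j
  have := h j (Finset.mem_univ _) i (Finset.mem_univ _)
  simpa [mul_eq_zero] using this

lemma normality {d : ℕ} (a₁ a₂ : Matrix (Fin d) (Fin d) ℂ) (h₁ : IsUnit a₁)
    (hpos' : (Matrix.fromBlocks (a₁ᴴ * a₁) (a₂ᴴ * a₁) (a₁ᴴ * a₂) (a₂ᴴ * a₂)).PosSemidef) :
    (a₂ * a₁⁻¹) * (a₂ * a₁⁻¹)ᴴ = (a₂ * a₁⁻¹)ᴴ * (a₂ * a₁⁻¹) := by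
  have hdet : IsUnit a₁.det := (Matrix.isUnit_iff_isUnit_det a₁).mp h₁
  have h1 : a₁ * a₁⁻¹ = 1 := Matrix.mul_nonsing_inv a₁ hdet
  have h2 : a₁⁻¹ * a₁ = 1 := Matrix.nonsing_inv_mul a₁ hdet
  have h3 : a₁ᴴ * (a₁⁻¹)ᴴ = 1 := by rw [← conjTranspose_mul, h2, conjTranspose_one]
  have h4 : (a₁⁻¹)ᴴ * a₁ᴴ = 1 := by rw [← conjTranspose_mul, h1, conjTranspose_one]
  have hPD : (a₁ᴴ * a₁).PosDef := by
    refine Matrix.posDef_iff_dotProduct_mulVec.mpr ⟨Matrix.isHermitian_conjTranspose_mul_self a₁, fun x hx => ?_⟩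
    have hax : a₁ *ᵥ x ≠ 0 := by
      intro h
      exact hx (by simpa [h2, Matrix.mulVec_mulVec] using congrArg (a₁⁻¹ *ᵥ ·) h)
    have : star (a₁ *ᵥ x) ⬝ᵥ (a₁ *ᵥ x) = star x ⬝ᵥ ((a₁ᴴ * a₁) *ᵥ x) := by
      simp only [Matrix.star_mulVec, Matrix.dotProduct_mulVec, ← Matrix.mulVec_mulVec]
    rw [← this]
    exact Matrix.dotProduct_star_self_pos_iff.mpr hax
  haveI : Invertible (a₁ᴴ * a₁) := hPD.isUnit.invertible
  have hpos'' : (Matrix.fromBlocks (a₁ᴴ * a₁) (a₂ᴴ * a₁) ((a₂ᴴ * a₁)ᴴ) (a₂ᴴ * a₂)).PosSemidef := by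
    simpa [Matrix.conjTranspose_mul] using hpos'
  have hschur := (Matrix.PosDef.fromBlocks₁₁ (a₂ᴴ * a₁) (a₂ᴴ * a₂) hPD).mp hpos''
  have hconj := hschur.conjTranspose_mul_mul_same a₁⁻¹
  have hinv : (a₁ᴴ * a₁)⁻¹ = a₁⁻¹ * (a₁⁻¹)ᴴ := by
    rw [Matrix.mul_inv_rev, Matrix.conjTranspose_nonsing_inv]
  have h4' : ∀ X : Matrix (Fin d) (Fin d) ℂ, (a₁⁻¹)ᴴ * (a₁ᴴ * X) = X := fun X => by
    rw [← Matrix.mul_assoc, h4, Matrix.one_mul]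
  have heq : (a₁⁻¹)ᴴ * (a₂ᴴ * a₂ - (a₂ᴴ * a₁)ᴴ * (a₁ᴴ * a₁)⁻¹ * (a₂ᴴ * a₁)) * a₁⁻¹ =
      (a₂ * a₁⁻¹)ᴴ * (a₂ * a₁⁻¹) - (a₂ * a₁⁻¹) * (a₂ * a₁⁻¹)ᴴ := by
    rw [hinv]
    simp only [Matrix.mul_sub, Matrix.sub_mul, Matrix.mul_assoc, Matrix.conjTranspose_mul,
      Matrix.conjTranspose_conjTranspose, h1, Matrix.mul_one, h4']
  rw [heq] at hconj
  have htr : ((a₂ * a₁⁻¹)ᴴ * (a₂ * a₁⁻¹) - (a₂ * a₁⁻¹) * (a₂ * a₁⁻¹)ᴴ).trace = 0 := by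
    rw [Matrix.trace_sub, Matrix.trace_mul_comm]
    ring
  have := trace_zero_of_psd hconj htr
  have := sub_eq_zero.mp this
  exact this.symm

open Module.End

local notation "⟪" x ", " y "⟫" => @inner ℂ _ _ x y

lemma normal_orthobasis {n : ℕ} {E : Type*} [NormedAddCommGroup E] [InnerProductSpace ℂ E]
    [FiniteDimensional ℂ E] (hn : Module.finrank ℂ E = n) (T : E →ₗ[ℂ] E)
    (hnormal : ∀ x, T (LinearMap.adjoint T x) = LinearMap.adjoint T (T x)) :
    ∃ (e : OrthonormalBasis (Fin n) ℂ E) (lam : Fin n → ℂ), ∀ i, T (e i) = lam i • e i := by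
  have key : ∀ (μ : ℂ) (v : E), T v = μ • v →
      LinearMap.adjoint T v = (starRingEnd ℂ) μ • v := by
    intro μ v hv
    have e1 : ⟪LinearMap.adjoint T v, LinearMap.adjoint T v⟫ =
        (starRingEnd ℂ) μ * (μ * ⟪v, v⟫) := by
      rw [LinearMap.adjoint_inner_left, hnormal, LinearMap.adjoint_inner_right, hv,
        inner_smul_left, inner_smul_right]
    have e2 : ⟪LinearMap.adjoint T v, v⟫ = μ * ⟪v, v⟫ := by
      rw [LinearMap.adjoint_inner_left, hv, inner_smul_right]
    have e3 : ⟪v, LinearMap.adjoint T v⟫ = (starRingEnd ℂ) μ * ⟪v, v⟫ := by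
      rw [LinearMap.adjoint_inner_right, hv, inner_smul_left]
    have h0 : ⟪LinearMap.adjoint T v - (starRingEnd ℂ) μ • v,
        LinearMap.adjoint T v - (starRingEnd ℂ) μ • v⟫ = 0 := by
      simp only [inner_sub_left, inner_sub_right, inner_smul_left, inner_smul_right,
        e1, e2, e3, RingHom.id_apply, starRingEnd_self_apply]
      ring
    exact sub_eq_zero.mp (inner_self_eq_zero.mp h0)
  -- orthogonality of eigenspaces
  have horth0 : OrthogonalFamily ℂ (fun μ : ℂ => eigenspace T μ)
      (fun μ => (eigenspace T μ).subtypeₗᵢ) := by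
    rintro μ ν hμν ⟨v, hv⟩ ⟨w, hw⟩
    rw [mem_eigenspace_iff] at hv hw
    simp only [Submodule.coe_subtypeₗᵢ, Submodule.coe_subtype]
    have h1 : ⟪T v, w⟫ = (starRingEnd ℂ) ν * ⟪v, w⟫ := by
      rw [← LinearMap.adjoint_inner_right, key ν w hw, inner_smul_right]
    have h2 : ⟪T v, w⟫ = (starRingEnd ℂ) μ * ⟪v, w⟫ := by
      rw [hv, inner_smul_left]
    have hne : (starRingEnd ℂ) μ ≠ (starRingEnd ℂ) ν :=
      fun h => hμν ((starRingEnd ℂ).injective h)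
    rcases mul_eq_mul_right_iff.mp (h2.symm.trans h1) with h | h
    · exact absurd h hne
    · exact h
  have horth : OrthogonalFamily ℂ (fun μ : Eigenvalues T => eigenspace T μ)
      (fun μ => (eigenspace T μ).subtypeₗᵢ) :=
    horth0.comp Subtype.coe_injective
  -- invariance of the orthogonal complement of the eigenspaces
  have hinv_each : ∀ μ : ℂ, ∀ v ∈ (eigenspace T μ)ᗮ, T v ∈ (eigenspace T μ)ᗮ := by
    intro μ v hv
    intro u hu
    have hu' : T u = μ • u := mem_eigenspace_iff.mp hu
    rw [← LinearMap.adjoint_inner_left, key μ u hu', inner_smul_left]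
    rw [Submodule.mem_orthogonal] at hv
    rw [hv u hu, mul_zero]
  have hinv : ∀ v ∈ (⨆ μ : ℂ, eigenspace T μ)ᗮ, T v ∈ (⨆ μ : ℂ, eigenspace T μ)ᗮ := by
    intro v hv
    rw [← Submodule.iInf_orthogonal] at hv ⊢
    exact T.iInf_invariant hinv_each v hv
  -- the eigenspaces span
  have hbot : (⨆ μ : ℂ, eigenspace T μ)ᗮ = ⊥ := by
    by_contra h
    haveI : Nontrivial ((⨆ μ : ℂ, eigenspace T μ)ᗮ : Submodule ℂ E) :=
      Submodule.nontrivial_iff_ne_bot.mpr h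
    obtain ⟨μ, hμ⟩ := Module.End.exists_eigenvalue (T.restrict hinv)
    obtain ⟨v, hv⟩ := hμ.exists_hasEigenvector
    have hvE : T (v : E) = μ • (v : E) := by
      have := congrArg (Subtype.val) (mem_eigenspace_iff.mp hv.1)
      simpa [LinearMap.restrict_coe_apply] using this
    have hmem : (v : E) ∈ ⨆ μ : ℂ, eigenspace T μ :=
      Submodule.mem_iSup_of_mem μ (mem_eigenspace_iff.mpr hvE)
    have hperp : (v : E) ∈ (⨆ μ : ℂ, eigenspace T μ)ᗮ := v.2
    have : (v : E) = 0 := by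
      have h0 := (Submodule.mem_orthogonal _ _).mp hperp (v : E) hmem
      exact inner_self_eq_zero.mp h0
    exact hv.2 (Subtype.ext this)
  have hbot' : (⨆ μ : Eigenvalues T, eigenspace T μ)ᗮ = ⊥ :=
    show (⨆ μ : { μ : ℂ // eigenspace T μ ≠ ⊥ }, eigenspace T μ)ᗮ = ⊥ by
      rw [iSup_ne_bot_subtype, hbot]
  have hint : DirectSum.IsInternal fun μ : Eigenvalues T => eigenspace T μ :=
    horth.isInternal_iff.mpr hbot'
  have idx : Fin n → Eigenvalues T := fun i =>
    hint.subordinateOrthonormalBasisIndex hn i horth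
  refine ⟨hint.subordinateOrthonormalBasis hn horth,
    fun i => ((hint.subordinateOrthonormalBasisIndex hn i horth).1 : ℂ), fun i => ?_⟩
  exact mem_eigenspace_iff.mp (hint.subordinateOrthonormalBasis_subordinate hn i horth)

lemma vecMulVec_mulVec' {d : ℕ} (u w x : Fin d → ℂ) :
    (Matrix.vecMulVec u w) *ᵥ x = (w ⬝ᵥ x) • u := by
  funext i
  simp [Matrix.mulVec, Matrix.vecMulVec_apply, dotProduct, Finset.mul_sum, mul_comm,
    mul_left_comm]

lemma normal_spectral {d : ℕ} (b : Matrix (Fin d) (Fin d) ℂ)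
    (hb : b * bᴴ = bᴴ * b) :
    ∃ (lam : Fin d → ℂ) (e : Fin d → (Fin d → ℂ)),
      (∀ i j, star (e i) ⬝ᵥ e j = if i = j then 1 else 0) ∧
      b = ∑ i, lam i • Matrix.vecMulVec (e i) (star (e i)) := by
  set T : EuclideanSpace ℂ (Fin d) →ₗ[ℂ] EuclideanSpace ℂ (Fin d) :=
    Matrix.toEuclideanLin b with hTdef
  have hadj : LinearMap.adjoint T = Matrix.toEuclideanLin bᴴ :=
    (Matrix.toEuclideanLin_conjTranspose_eq_adjoint b).symm
  have hnormal : ∀ x : EuclideanSpace ℂ (Fin d),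
      T (LinearMap.adjoint T x) = LinearMap.adjoint T (T x) := by
    intro x
    rw [hadj, hTdef]
    show (WithLp.equiv 2 (Fin d → ℂ)).symm
        (b *ᵥ (bᴴ *ᵥ (WithLp.equiv 2 (Fin d → ℂ)) x)) =
      (WithLp.equiv 2 (Fin d → ℂ)).symm
        (bᴴ *ᵥ (b *ᵥ (WithLp.equiv 2 (Fin d → ℂ)) x))
    rw [Matrix.mulVec_mulVec, Matrix.mulVec_mulVec, hb]
  obtain ⟨e', lam, heig⟩ :=
    normal_orthobasis (finrank_euclideanSpace_fin (𝕜 := ℂ) (n := d)) T hnormal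
  set e : Fin d → (Fin d → ℂ) := fun i => (WithLp.equiv 2 (Fin d → ℂ)) (e' i) with hedef
  have horthog : ∀ i j, star (e i) ⬝ᵥ e j = if i = j then (1 : ℂ) else 0 := by
    intro i j
    have h := orthonormal_iff_ite.mp e'.orthonormal i j
    rw [EuclideanSpace.inner_eq_star_dotProduct] at h
    exact (dotProduct_comm _ _).trans h
  refine ⟨lam, e, horthog, ?_⟩
  have hev : ∀ i j, Matrix.toEuclideanLin (Matrix.vecMulVec (e i) (star (e i))) (e' j)
      = (if i = j then (1 : ℂ) else 0) • e' i := by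
    intro i j
    calc Matrix.toEuclideanLin (Matrix.vecMulVec (e i) (star (e i))) (e' j)
        = (WithLp.equiv 2 (Fin d → ℂ)).symm
            ((Matrix.vecMulVec (e i) (star (e i))) *ᵥ e j) := rfl
      _ = (WithLp.equiv 2 (Fin d → ℂ)).symm ((star (e i) ⬝ᵥ e j) • e i) := by
          rw [vecMulVec_mulVec']
      _ = (star (e i) ⬝ᵥ e j) • e' i := by
          rw [show ∀ (c : ℂ) (v : Fin d → ℂ), (WithLp.equiv 2 (Fin d → ℂ)).symm (c • v) = c • (WithLp.equiv 2 (Fin d → ℂ)).symm v from fun _ _ => rfl]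
          simp [hedef]
      _ = (if i = j then (1 : ℂ) else 0) • e' i := by rw [horthog i j]
  have hlin : Matrix.toEuclideanLin b =
      Matrix.toEuclideanLin (∑ i, lam i • Matrix.vecMulVec (e i) (star (e i))) := by
    apply Module.Basis.ext e'.toBasis
    intro j
    rw [OrthonormalBasis.coe_toBasis]
    rw [map_sum, LinearMap.sum_apply]
    have : ∀ i, (Matrix.toEuclideanLin (lam i • Matrix.vecMulVec (e i) (star (e i)))) (e' j)
        = lam i • ((if i = j then (1 : ℂ) else 0) • e' i) := by
      intro i
      rw [_root_.map_smul, LinearMap.smul_apply, hev]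
    rw [Finset.sum_congr rfl fun i _ => this i]
    have hL : Matrix.toEuclideanLin b (e' j) = lam j • e' j := heig j
    rw [hL]
    simp [ite_smul, smul_smul]
  exact (Matrix.toEuclideanLin (𝕜 := ℂ) (m := Fin d) (n := Fin d)).injective hlin

lemma vecMulVec_star_mulVec {d : ℕ} (a₁ : Matrix (Fin d) (Fin d) ℂ) (u : Fin d → ℂ) :
    Matrix.vecMulVec u (star u) * a₁ = Matrix.vecMulVec u (star (a₁ᴴ.mulVec u)) := by
  ext k j
  simp only [Matrix.mul_apply, Matrix.vecMulVec_apply, Pi.star_apply, Matrix.mulVec,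
    dotProduct, Matrix.conjTranspose_apply, star_sum, star_mul', star_star]
  rw [Finset.mul_sum]
  exact Finset.sum_congr rfl fun l _ => by ring


/-- Under the Størmer condition (both `[[a₁*a₁, a₁*a₂],[a₂*a₁, a₂*a₂]]` and its block
transpose positive semidefinite, `a₁, a₂` invertible), there are scalars `λᵢ` and an
orthonormal basis `{eᵢ}` with `a₂ = ∑ᵢ λᵢ |eᵢ⟩⟨a₁*eᵢ|`. -/
theorem stormer_condition_gives_canonical_form {d : ℕ}
    (a₁ a₂ : Matrix (Fin d) (Fin d) ℂ) (h₁ : IsUnit a₁) (h₂ : IsUnit a₂)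
    (hpos : (Matrix.fromBlocks (a₁ᴴ * a₁) (a₁ᴴ * a₂) (a₂ᴴ * a₁) (a₂ᴴ * a₂)).PosSemidef)
    (hpos' : (Matrix.fromBlocks (a₁ᴴ * a₁) (a₂ᴴ * a₁) (a₁ᴴ * a₂) (a₂ᴴ * a₂)).PosSemidef) :
    ∃ (lam : Fin d → ℂ) (e : Fin d → (Fin d → ℂ)),
      (∀ i j, star (e i) ⬝ᵥ e j = if i = j then 1 else 0) ∧
      a₂ = ∑ i, lam i • Matrix.vecMulVec (e i) (star (a₁ᴴ.mulVec (e i))) := by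
  have hdet : IsUnit a₁.det := (Matrix.isUnit_iff_isUnit_det a₁).mp h₁
  have hb := normality a₁ a₂ h₁ hpos'
  obtain ⟨lam, e, horth, hsum⟩ := normal_spectral (a₂ * a₁⁻¹) hb
  refine ⟨lam, e, horth, ?_⟩
  have ha₂ : a₂ = (a₂ * a₁⁻¹) * a₁ := by
    rw [Matrix.mul_assoc, Matrix.nonsing_inv_mul a₁ hdet, Matrix.mul_one]
  rw [ha₂, hsum, Finset.sum_mul]
  exact Finset.sum_congr rfl fun i _ => by
    rw [Matrix.smul_mul, vecMulVec_star_mulVec]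
end

section
/- If a₁, a₂ are d×d matrices with a₁ invertible and a₂ = Σᵢ λᵢ |eᵢ⟩⟨a₁*eᵢ| for an orthonormal basis {eᵢ} and scalars λᵢ, then the block matrix decomposes as [[a₁*a₁, a₁*a₂],[a₂*a₁, a₂*a₂]] = Σᵢ αᵢ²(1+|λᵢ|²) (Pᵢ ⊗ 1)(1 ⊗ |φᵢ⟩⟨φᵢ|), where αᵢ = ‖a₁*eᵢ‖, φᵢ = a₁*eᵢ/αᵢ, and Pᵢ = (1+|λᵢ|²)^{-1} [[1, λᵢ],[λ̄ᵢ, |λᵢ|²]] is a rank-one projection in M₂(ℂ); in particular the block matrix lies in the cone generated by M₂(ℂ)⁺ ⊗ B(ℂᵈ)⁺. -/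
open Matrix
open scoped ComplexOrder

open Matrix Kronecker ComplexConjugate

lemma psd_vecMulVec {n : Type*} [Fintype n] (w : n → ℂ) :
    (Matrix.vecMulVec w (star w)).PosSemidef := by
  rw [Matrix.vecMulVec_eq (ι := Unit), ← Matrix.conjTranspose_replicateCol]
  exact Matrix.posSemidef_self_mul_conjTranspose _

lemma psd_smul {n : Type*} [Fintype n] [DecidableEq n] {M : Matrix n n ℂ}
    (hM : M.PosSemidef) {c : ℝ} (hc : 0 ≤ c) : ((c : ℂ) • M).PosSemidef := by
  constructor
  · unfold Matrix.IsHermitian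
    rw [Matrix.conjTranspose_smul, hM.1]
    congr 1
    simp
  · intro x
    have hc' : (0:ℂ) ≤ (c:ℂ) := by exact_mod_cast Complex.zero_le_real.mpr hc
    exact (hM.smul hc').2 x

lemma mul_vecMulVec {n : Type*} [Fintype n] (A : Matrix n n ℂ) (u w : n → ℂ) :
    A * Matrix.vecMulVec u w = Matrix.vecMulVec (A.mulVec u) w := by
  ext x y
  simp [Matrix.mul_apply, Matrix.vecMulVec_apply, Matrix.mulVec, dotProduct,
    Finset.sum_mul]
  exact Finset.sum_congr rfl fun k _ => by ring

lemma vecMulVec_mul {n : Type*} [Fintype n] (B : Matrix n n ℂ) (u w : n → ℂ) :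
    Matrix.vecMulVec u w * B = Matrix.vecMulVec u (w ᵥ* B) := by
  ext x y
  simp [Matrix.mul_apply, Matrix.vecMulVec_apply, Matrix.vecMul, dotProduct,
    Finset.mul_sum]
  exact Finset.sum_congr rfl fun k _ => by ring

lemma conjTranspose_vecMulVec {n : Type*} [Fintype n] (u w : n → ℂ) :
    (Matrix.vecMulVec u w)ᴴ = Matrix.vecMulVec (star w) (star u) := by
  ext x y
  simp [Matrix.vecMulVec_apply, mul_comm]

lemma vecMulVec_mul_vecMulVec {n : Type*} [Fintype n] (u w u' w' : n → ℂ) :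
    Matrix.vecMulVec u w * Matrix.vecMulVec u' w' = (w ⬝ᵥ u') • Matrix.vecMulVec u w' := by
  ext x y
  simp [Matrix.mul_apply, Matrix.vecMulVec_apply, dotProduct, Finset.sum_mul,
    Finset.mul_sum]
  exact Finset.sum_congr rfl fun k _ => by ring

lemma complete_onb {d : ℕ} (e : Fin d → (Fin d → ℂ))
    (he : ∀ i j, star (e i) ⬝ᵥ e j = if i = j then 1 else 0) :
    ∑ i, Matrix.vecMulVec (e i) (star (e i)) = (1 : Matrix (Fin d) (Fin d) ℂ) := by
  set U : Matrix (Fin d) (Fin d) ℂ := Matrix.of (fun k i => e i k) with hU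
  have h1 : Uᴴ * U = 1 := by
    ext i j
    have := he i j
    simpa [Matrix.mul_apply, hU, dotProduct, Matrix.one_apply] using this
  have h2 : U * Uᴴ = 1 := mul_eq_one_comm.mp h1
  ext x y
  rw [← h2]
  simp [Matrix.mul_apply, hU, Matrix.vecMulVec_apply, Matrix.sum_apply]


/-- If `a₁` is invertible and `a₂ = ∑ᵢ λᵢ |eᵢ⟩⟨a₁*eᵢ|` for an orthonormal basis `{eᵢ}`,
then the block matrix `[[a₁*a₁, a₁*a₂],[a₂*a₁, a₂*a₂]]` (viewed in `M₂(ℂ) ⊗ B(ℂᵈ)`)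
equals `∑ᵢ αᵢ²(1+|λᵢ|²) Pᵢ ⊗ |φᵢ⟩⟨φᵢ|`, a sum of tensor products of positive elements. -/
theorem stormer_block_matrix_separable {d : ℕ}
    (a₁ a₂ : Matrix (Fin d) (Fin d) ℂ) (h₁ : IsUnit a₁)
    (lam : Fin d → ℂ) (e : Fin d → (Fin d → ℂ))
    (he : ∀ i j, star (e i) ⬝ᵥ e j = if i = j then 1 else 0)
    (ha₂ : a₂ = ∑ i, lam i • Matrix.vecMulVec (e i) (star (a₁ᴴ.mulVec (e i)))) :
    let α : Fin d → ℝ := fun i => Real.sqrt ((star (a₁ᴴ.mulVec (e i)) ⬝ᵥ a₁ᴴ.mulVec (e i)).re)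
    let φ : Fin d → (Fin d → ℂ) := fun i => ((α i : ℝ) : ℂ)⁻¹ • a₁ᴴ.mulVec (e i)
    let P : Fin d → Matrix (Fin 2) (Fin 2) ℂ := fun i =>
      (((1 + ‖lam i‖ ^ 2 : ℝ)) : ℂ)⁻¹ • !![1, lam i; conj (lam i), ((‖lam i‖ ^ 2 : ℝ) : ℂ)]
    let Q : Fin d → Matrix (Fin d) (Fin d) ℂ := fun i => Matrix.vecMulVec (φ i) (star (φ i))
    (fun p q => ((![a₁, a₂] p.1)ᴴ * (![a₁, a₂] q.1)) p.2 q.2 :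
        Matrix (Fin 2 × Fin d) (Fin 2 × Fin d) ℂ)
      = ∑ i, (((α i ^ 2 * (1 + ‖lam i‖ ^ 2) : ℝ)) : ℂ) • (P i ⊗ₖ Q i) ∧
    ∀ i, (P i).PosSemidef ∧ (Q i).PosSemidef := by
  intro α φ P Q
  set v : Fin d → (Fin d → ℂ) := fun i => a₁ᴴ.mulVec (e i) with hv
  -- basic facts about v and α
  have h₁' : IsUnit a₁ᴴ := by
    rw [Matrix.isUnit_iff_isUnit_det, Matrix.det_conjTranspose]
    exact ((Matrix.isUnit_iff_isUnit_det a₁).mp h₁).star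
  have hvne : ∀ i, v i ≠ 0 := by
    intro i hvi
    have hinj := Matrix.mulVec_injective_iff_isUnit.mpr h₁'
    have he0 : e i = 0 := by
      apply hinj
      simpa [Matrix.mulVec_zero] using hvi
    have := he i i
    simp [he0] at this
  have hdp : ∀ i, star (v i) ⬝ᵥ v i = (((α i) ^ 2 : ℝ) : ℂ) := by
    intro i
    have hnn : (0:ℂ) ≤ star (v i) ⬝ᵥ v i := dotProduct_star_self_nonneg _
    obtain ⟨hre, him⟩ := Complex.le_def.mp hnn
    have : α i = Real.sqrt ((star (v i) ⬝ᵥ v i).re) := rfl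
    rw [this, Real.sq_sqrt (by simpa using hre)]
    exact (Complex.ext (by simp) (by simpa using him)).symm
  have hαne : ∀ i, ((α i : ℝ) : ℂ) ≠ 0 := by
    intro i hα0
    have : star (v i) ⬝ᵥ v i = 0 := by
      rw [hdp i]
      simp_all
    exact hvne i (dotProduct_star_self_eq_zero.mp this)
  have hstar : ∀ i, star (v i) = star (e i) ᵥ* a₁ := by
    intro i
    rw [hv]
    simp [Matrix.star_mulVec]
  -- block computations
  have hA2H : a₂ᴴ = ∑ i, conj (lam i) • Matrix.vecMulVec (v i) (star (e i)) := by
    rw [ha₂, Matrix.conjTranspose_sum]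
    refine Finset.sum_congr rfl fun i _ => ?_
    rw [Matrix.conjTranspose_smul, _root_.conjTranspose_vecMulVec, star_star]
    rfl
  have h00 : a₁ᴴ * a₁ = ∑ i, Matrix.vecMulVec (v i) (star (v i)) := by
    calc a₁ᴴ * a₁ = a₁ᴴ * (∑ i, Matrix.vecMulVec (e i) (star (e i))) * a₁ := by
          rw [complete_onb e he, mul_one]
      _ = ∑ i, a₁ᴴ * Matrix.vecMulVec (e i) (star (e i)) * a₁ := by
          rw [Finset.mul_sum, Finset.sum_mul]
      _ = ∑ i, Matrix.vecMulVec (v i) (star (v i)) := by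
          refine Finset.sum_congr rfl fun i _ => ?_
          rw [_root_.mul_vecMulVec, _root_.vecMulVec_mul, hstar i]
  have h01 : a₁ᴴ * a₂ = ∑ i, lam i • Matrix.vecMulVec (v i) (star (v i)) := by
    rw [ha₂, Finset.mul_sum]
    refine Finset.sum_congr rfl fun i _ => ?_
    rw [mul_smul_comm, _root_.mul_vecMulVec]
  have h10 : a₂ᴴ * a₁ = ∑ i, conj (lam i) • Matrix.vecMulVec (v i) (star (v i)) := by
    rw [hA2H, Finset.sum_mul]
    refine Finset.sum_congr rfl fun i _ => ?_
    rw [smul_mul_assoc, _root_.vecMulVec_mul, ← hstar i]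
  have h11 : a₂ᴴ * a₂ = ∑ i, ((‖lam i‖ ^ 2 : ℝ) : ℂ) • Matrix.vecMulVec (v i) (star (v i)) := by
    rw [hA2H, ha₂, Finset.sum_mul]
    refine Finset.sum_congr rfl fun i _ => ?_
    rw [Finset.mul_sum]
    rw [Finset.sum_eq_single i]
    · rw [smul_mul_smul_comm, _root_.vecMulVec_mul_vecMulVec, he i i, if_pos rfl, one_smul]
      congr 1
      rw [mul_comm]
      exact_mod_cast Complex.mul_conj' (lam i)
    · intro j _ hj
      rw [smul_mul_smul_comm, _root_.vecMulVec_mul_vecMulVec, he i j, if_neg (fun h => hj h.symm), zero_smul, smul_zero]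
    · intro h; exact absurd (Finset.mem_univ i) h
  constructor
  · ext ⟨p, x⟩ ⟨q, y⟩
    have hrhs : (∑ i, (((α i ^ 2 * (1 + ‖lam i‖ ^ 2) : ℝ)) : ℂ) • (P i ⊗ₖ Q i)) (p, x) (q, y)
        = ∑ i, (((α i ^ 2 * (1 + ‖lam i‖ ^ 2) : ℝ)) : ℂ) *
            (P i p q * (φ i x * conj (φ i y))) := by
      simp [Matrix.sum_apply, Q, Matrix.vecMulVec_apply, Pi.star_apply]
    rw [hrhs]
    have hterm : ∀ i, (((α i ^ 2 * (1 + ‖lam i‖ ^ 2) : ℝ)) : ℂ) *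
        (P i p q * (φ i x * conj (φ i y)))
        = ((1 + ‖lam i‖ ^ 2 : ℝ) : ℂ) * P i p q * (v i x * conj (v i y)) := by
      intro i
      have hφ : ∀ z, φ i z = ((α i : ℝ) : ℂ)⁻¹ * v i z := fun z => rfl
      rw [hφ x, hφ y, _root_.map_mul, _root_.map_inv₀, Complex.conj_ofReal]
      push_cast
      field_simp [hαne i]
    rw [Finset.sum_congr rfl fun i _ => hterm i]
    have hP : ∀ i (p q : Fin 2), ((1 + ‖lam i‖ ^ 2 : ℝ) : ℂ) * P i p q
        = !![1, lam i; conj (lam i), ((‖lam i‖ ^ 2 : ℝ) : ℂ)] p q := by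
      intro i p q
      have hc : ((1 + ‖lam i‖ ^ 2 : ℝ) : ℂ) ≠ 0 := by
        have : (0:ℝ) < 1 + ‖lam i‖ ^ 2 := by positivity
        exact_mod_cast Complex.ofReal_ne_zero.mpr this.ne'
      simp only [P, Matrix.smul_apply, smul_eq_mul]
      field_simp
    rw [Finset.sum_congr rfl fun i _ => by rw [hP]]
    show ((![a₁, a₂] p)ᴴ * ![a₁, a₂] q) x y = _
    fin_cases p <;> fin_cases q <;>
      simp only [Fin.mk_zero, Fin.mk_one, Matrix.cons_val_zero, Matrix.cons_val_one,
        Matrix.head_cons] <;>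
      [rw [h00]; rw [h01]; rw [h10]; rw [h11]] <;>
      simp [Matrix.sum_apply, Matrix.vecMulVec_apply, Matrix.cons_val_zero, Matrix.cons_val_one,
        Matrix.head_cons, mul_comm, mul_assoc, mul_left_comm]
  · intro i
    constructor
    · have h1 : !![1, lam i; conj (lam i), ((‖lam i‖ ^ 2 : ℝ) : ℂ)]
          = Matrix.vecMulVec ![1, conj (lam i)] (star ![1, conj (lam i)]) := by
        ext p q
        fin_cases p <;> fin_cases q <;>
          simp [Matrix.vecMulVec_apply, mul_comm, Complex.mul_conj']
      have : P i = (((1 + ‖lam i‖ ^ 2 : ℝ)⁻¹ : ℝ) : ℂ) •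
          Matrix.vecMulVec ![1, conj (lam i)] (star ![1, conj (lam i)]) := by
        simp only [P, h1]
        norm_num
      rw [this]
      exact psd_smul (psd_vecMulVec _) (by positivity)
    · exact psd_vecMulVec _
end

section
/- Let P = |x₂⟩⟨x₂| be the projection onto the maximally entangled vector x₂ = (1/√3)(e₁⊗f₁ + e₂⊗f₂ + e₃⊗f₃) in ℂ³⊗ℂ³. For every operator S = Σᵢ aᵢ ⊗ bᵢ (finite sum) with all aᵢ, bᵢ positive semidefinite 3×3 matrices, ‖P − S‖ ≥ 1/6 in operator norm. -/
open Matrix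
open scoped ComplexOrder
open Kronecker
open scoped Matrix.Norms.L2Operator

section helpers

lemma quad_le {ι : Type*} [Fintype ι] [DecidableEq ι] (M : Matrix ι ι ℂ) (x : ι → ℂ) :
    ‖star x ⬝ᵥ M *ᵥ x‖ ≤ ‖M‖ * ∑ p, ‖x p‖^2 := by
  let y : EuclideanSpace ℂ ι := (WithLp.equiv 2 _).symm x
  have h1 : ‖(EuclideanSpace.equiv ι ℂ).symm (M *ᵥ x)‖ ≤ ‖M‖ * ‖y‖ := M.l2_opNorm_mulVec y
  have h2 : star x ⬝ᵥ (M *ᵥ x) = @inner ℂ _ _ y ((EuclideanSpace.equiv ι ℂ).symm (M *ᵥ x)) := by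
    simp [PiLp.inner_apply, dotProduct, y, mul_comm]
  have h3 : ‖y‖^2 = ∑ p, ‖x p‖^2 := by
    rw [EuclideanSpace.norm_eq, Real.sq_sqrt (by positivity)]
    rfl
  calc ‖star x ⬝ᵥ M *ᵥ x‖ ≤ ‖y‖ * ‖(EuclideanSpace.equiv ι ℂ).symm (M *ᵥ x)‖ := by
        rw [h2]; exact norm_inner_le_norm _ _
    _ ≤ ‖y‖ * (‖M‖ * ‖y‖) := by apply mul_le_mul_of_nonneg_left h1 (norm_nonneg _)
    _ = ‖M‖ * ∑ p, ‖x p‖^2 := by rw [← h3]; ring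

lemma quad_two {ι : Type*} [Fintype ι] [DecidableEq ι] (M : Matrix ι ι ℂ) {s t : ι}
    (hst : s ≠ t) (c d : ℂ) :
    star ((Pi.single s c : ι → ℂ) + Pi.single t d) ⬝ᵥ M *ᵥ ((Pi.single s c : ι → ℂ) + Pi.single t d)
    = star c * M s s * c + star c * M s t * d + star d * M t s * c + star d * M t t * d := by
  have hs : star ((Pi.single s c : ι → ℂ) + Pi.single t d)
      = (Pi.single s (star c) : ι → ℂ) + Pi.single t (star d) := by
    ext p; by_cases h1 : p = s <;> by_cases h2 : p = t <;>
      simp_all [Pi.single_apply, hst]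
  rw [hs, Matrix.mulVec_add, Matrix.mulVec_single, Matrix.mulVec_single]
  simp [add_dotProduct, dotProduct_add, single_dotProduct,
    Pi.single_apply, hst, hst.symm]
  ring

lemma quad_one {ι : Type*} [Fintype ι] [DecidableEq ι] (M : Matrix ι ι ℂ) (s : ι) (c : ℂ) :
    star (Pi.single s c : ι → ℂ) ⬝ᵥ M *ᵥ (Pi.single s c : ι → ℂ) = star c * M s s * c := by
  have hs : star (Pi.single s c : ι → ℂ) = (Pi.single s (star c) : ι → ℂ) := by
    ext p; by_cases h1 : p = s <;> simp_all [Pi.single_apply]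
  rw [hs, Matrix.mulVec_single]
  simp [single_dotProduct]
  ring

lemma sum_sq_one {ι : Type*} [Fintype ι] [DecidableEq ι] (s : ι) (c : ℂ) :
    ∑ p, ‖(Pi.single s c : ι → ℂ) p‖^2 = ‖c‖^2 := by
  have h : ∀ p, ‖(Pi.single s c : ι → ℂ) p‖^2 = if p = s then ‖c‖^2 else 0 := by
    intro p; by_cases h1 : p = s <;> simp_all [Pi.single_apply]
  simp only [h]
  rw [Finset.sum_ite_eq']
  simp

lemma sum_sq_two {ι : Type*} [Fintype ι] [DecidableEq ι] {s t : ι} (hst : s ≠ t) (c d : ℂ) :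
    ∑ p : ι, ‖((Pi.single s c : ι → ℂ) + (Pi.single t d : ι → ℂ)) p‖^2 = ‖c‖^2 + ‖d‖^2 := by
  have h : ∀ p, ‖((Pi.single s c : ι → ℂ) + (Pi.single t d : ι → ℂ)) p‖^2
      = (if p = s then ‖c‖^2 else 0) + (if p = t then ‖d‖^2 else 0) := by
    intro p; by_cases h1 : p = s <;> by_cases h2 : p = t <;> simp_all [Pi.single_apply, hst]
  simp only [h]
  rw [Finset.sum_add_distrib, Finset.sum_ite_eq', Finset.sum_ite_eq']
  simp

lemma psd_diag {ι : Type*} [Fintype ι] [DecidableEq ι] {a : Matrix ι ι ℂ}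
    (h : a.PosSemidef) (i : ι) : a i i = ((a i i).re : ℝ) ∧ 0 ≤ (a i i).re := by
  have h0 := h.dotProduct_mulVec_nonneg (Pi.single i 1)
  rw [quad_one] at h0
  simp only [star_one, one_mul, mul_one] at h0
  rw [Complex.nonneg_iff] at h0
  exact ⟨Complex.ext rfl h0.2.symm, h0.1⟩

lemma psd_minor {ι : Type*} [Fintype ι] [DecidableEq ι] {a : Matrix ι ι ℂ}
    (h : a.PosSemidef) {i j : ι} (hij : i ≠ j) :
    ‖a i j‖ ^ 2 ≤ (a i i).re * (a j j).re := by
  obtain ⟨hii, hα⟩ := psd_diag h i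
  obtain ⟨hjj, hβ⟩ := psd_diag h j
  have hji : a j i = (starRingEnd ℂ) (a i j) := by rw [← h.1.apply j i]; rfl
  have hgg : a i j * (starRingEnd ℂ) (a i j) = ((‖a i j‖ : ℝ) : ℂ)^2 := by
    rw [Complex.mul_conj, Complex.normSq_eq_norm_sq]
    push_cast
    ring
  have H1 : (0:ℝ) ≤ (a i i).re * (a j j).re^2 - (a j j).re * ‖a i j‖ ^ 2 := by
    have h0 := h.dotProduct_mulVec_nonneg ((Pi.single i (((a j j).re:ℝ):ℂ) : ι → ℂ) + Pi.single j (-(starRingEnd ℂ) (a i j)))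
    rw [quad_two a hij] at h0
    have heq : star (((a j j).re:ℝ):ℂ) * a i i * (((a j j).re:ℝ):ℂ)
        + star (((a j j).re:ℝ):ℂ) * a i j * (-(starRingEnd ℂ) (a i j))
        + star (-(starRingEnd ℂ) (a i j)) * a j i * (((a j j).re:ℝ):ℂ)
        + star (-(starRingEnd ℂ) (a i j)) * a j j * (-(starRingEnd ℂ) (a i j))
        = (((a i i).re * (a j j).re^2 - (a j j).re * ‖a i j‖ ^ 2 : ℝ) : ℂ) := by
      rw [hji]
      simp only [Complex.star_def, map_neg, Complex.conj_conj, Complex.conj_ofReal]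
      push_cast
      linear_combination ((((a j j).re:ℝ):ℂ)^2) * hii + (a i j * (starRingEnd ℂ) (a i j)) * hjj
        - (((a j j).re:ℝ):ℂ) * hgg
    rw [heq] at h0
    have := (Complex.nonneg_iff.mp h0).1
    rwa [Complex.ofReal_re] at this
  by_cases hb : (a j j).re = 0
  · have H2 : ∀ r : ℝ, (0:ℝ) ≤ r^2 * ‖a i j‖ ^ 2 * (a i i).re
        - 2 * r * ‖a i j‖ ^ 2 + (a j j).re := by
      intro r
      have h0 := h.dotProduct_mulVec_nonneg ((Pi.single i (-(r:ℂ) * (a i j)) : ι → ℂ) + Pi.single j 1)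
      rw [quad_two a hij] at h0
      have heq : star (-(r:ℂ) * (a i j)) * a i i * (-(r:ℂ) * (a i j))
          + star (-(r:ℂ) * (a i j)) * a i j * 1
          + star (1:ℂ) * a j i * (-(r:ℂ) * (a i j)) + star (1:ℂ) * a j j * 1
          = ((r^2 * ‖a i j‖ ^ 2 * (a i i).re
              - 2 * r * ‖a i j‖ ^ 2 + (a j j).re : ℝ) : ℂ) := by
        rw [hji]
        simp only [Complex.star_def, _root_.map_mul, map_neg, Complex.conj_ofReal, star_one,
          one_mul, mul_one]
        push_cast
        linear_combination ((r:ℂ)^2 * a i i - 2*(r:ℂ)) * hgg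
          + ((r:ℂ)^2 * (((‖a i j‖):ℝ):ℂ)^2) * hii + hjj
      rw [heq] at h0
      have := (Complex.nonneg_iff.mp h0).1
      rwa [Complex.ofReal_re] at this
    have hpos : (0:ℝ) < (a i i).re + 1 := by linarith
    have hpos2 : (0:ℝ) < ((a i i).re + 1)^2 := by positivity
    have key : (0:ℝ) ≤ ‖a i j‖^2 * (a i i).re
        - 2 * ‖a i j‖^2 * ((a i i).re + 1) := by
      have h2 := H2 (1/((a i i).re+1))
      rw [hb, add_zero] at h2
      have e : (1/((a i i).re+1))^2 * ‖a i j‖^2 * (a i i).re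
          - 2*(1/((a i i).re+1))*‖a i j‖^2
          = (‖a i j‖^2 * (a i i).re
            - 2 * ‖a i j‖^2 * ((a i i).re + 1)) / ((a i i).re+1)^2 := by
        field_simp
      rw [e] at h2
      have h3 := mul_le_mul_of_nonneg_right h2 (le_of_lt hpos2)
      rwa [zero_mul, div_mul_cancel₀ _ (ne_of_gt hpos2)] at h3
    rw [hb, mul_zero]
    nlinarith [sq_nonneg (‖a i j‖), mul_nonneg (sq_nonneg (‖a i j‖)) hα]
  · have hb' : 0 < (a j j).re := lt_of_le_of_ne hβ (Ne.symm hb)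
    nlinarith [H1]

-- per-index cross term bound
lemma cross_bound {α β γ δ : ℝ} {g d : ℝ} (hg : 0 ≤ g) (hd : 0 ≤ d)
    (hα : 0 ≤ α) (hβ : 0 ≤ β) (hγ : 0 ≤ γ) (hδ : 0 ≤ δ)
    (h1 : g^2 ≤ α * β) (h2 : d^2 ≤ γ * δ) :
    2 * (g * d) ≤ α * δ + β * γ := by
  have hgs : g ≤ Real.sqrt (α * β) := (Real.le_sqrt hg (mul_nonneg hα hβ)).mpr h1
  have hds : d ≤ Real.sqrt (γ * δ) := (Real.le_sqrt hd (mul_nonneg hγ hδ)).mpr h2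
  have h3 : g * d ≤ Real.sqrt (α * β) * Real.sqrt (γ * δ) :=
    mul_le_mul hgs hds hd (Real.sqrt_nonneg _)
  have h4 : Real.sqrt (α * β) * Real.sqrt (γ * δ) = Real.sqrt (α * δ) * Real.sqrt (β * γ) := by
    rw [← Real.sqrt_mul (mul_nonneg hα hβ), ← Real.sqrt_mul (mul_nonneg hα hδ)]
    ring_nf
  have h5 : 2 * (Real.sqrt (α * δ) * Real.sqrt (β * γ)) ≤ α * δ + β * γ := by
    nlinarith [sq_nonneg (Real.sqrt (α * δ) - Real.sqrt (β * γ)),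
      Real.sq_sqrt (mul_nonneg hα hδ), Real.sq_sqrt (mul_nonneg hβ hγ)]
  linarith [h3, h5, h4 ▸ h3]

end helpers

/-- The projection `P = |x₂⟩⟨x₂|` onto the maximally entangled vector
`x₂ = (1/√3)(e₁⊗f₁ + e₂⊗f₂ + e₃⊗f₃)` in `ℂ³ ⊗ ℂ³` satisfies `‖P − S‖ ≥ 1/6` in
operator norm for every finite sum `S = ∑ᵢ aᵢ ⊗ bᵢ` of tensor products of positive
semidefinite operators. -/
theorem kadison_ringrose_estimate (k : ℕ)
    (a : Fin k → Matrix (Fin 3) (Fin 3) ℂ) (b : Fin k → Matrix (Fin 3) (Fin 3) ℂ)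
    (ha : ∀ i, (a i).PosSemidef) (hb : ∀ i, (b i).PosSemidef) :
    let x₂ : Fin 3 × Fin 3 → ℂ := fun p => if p.1 = p.2 then (1 / Real.sqrt 3 : ℝ) else 0
    (1 / 6 : ℝ) ≤ ‖Matrix.vecMulVec x₂ (star x₂) - ∑ i, a i ⊗ₖ b i‖ := by
  intro x₂
  have hx : ∀ p : Fin 3 × Fin 3, x₂ p = if p.1 = p.2 then ((1 / Real.sqrt 3 : ℝ):ℂ) else 0 :=
    fun p => rfl
  set M := Matrix.vecMulVec x₂ (star x₂) - ∑ i, a i ⊗ₖ b i with hM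
  have hMe : ∀ p q : Fin 3 × Fin 3, M p q
      = x₂ p * (starRingEnd ℂ) (x₂ q) - ∑ i, a i p.1 q.1 * b i p.2 q.2 := by
    intro p q
    rw [hM, Matrix.sub_apply, Matrix.vecMulVec_apply, Matrix.sum_apply]
    rfl
  have h3 : ((1 / Real.sqrt 3:ℝ):ℂ) * (starRingEnd ℂ) ((1 / Real.sqrt 3:ℝ):ℂ) = ((1/3:ℝ):ℂ) := by
    rw [Complex.conj_ofReal, ← Complex.ofReal_mul]
    congr 1
    rw [div_mul_div_comm, one_mul, Real.mul_self_sqrt (by norm_num : (0:ℝ) ≤ 3)]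
  have hinv : ((Real.sqrt 3:ℝ):ℂ)⁻¹ * ((Real.sqrt 3:ℝ):ℂ)⁻¹ = 1/3 := by
    rw [← Complex.ofReal_inv, ← Complex.ofReal_mul, ← mul_inv,
      Real.mul_self_sqrt (by norm_num : (0:ℝ) ≤ 3)]
    norm_num
  -- entries
  have hM01 : M ((0:Fin 3),(1:Fin 3)) ((0:Fin 3),(1:Fin 3)) = -∑ i, a i 0 0 * b i 1 1 := by
    rw [hMe]
    simp [hx]
  have hM10 : M ((1:Fin 3),(0:Fin 3)) ((1:Fin 3),(0:Fin 3)) = -∑ i, a i 1 1 * b i 0 0 := by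
    rw [hMe]
    simp [hx]
  have hMss : M ((0:Fin 3),(0:Fin 3)) ((0:Fin 3),(0:Fin 3))
      = ((1/3:ℝ):ℂ) - ∑ i, a i 0 0 * b i 0 0 := by
    rw [hMe]
    simp only [hx]
    norm_num [hinv]
  have hMst : M ((0:Fin 3),(0:Fin 3)) ((1:Fin 3),(1:Fin 3))
      = ((1/3:ℝ):ℂ) - ∑ i, a i 0 1 * b i 0 1 := by
    rw [hMe]
    simp only [hx]
    norm_num [hinv]
  have hMts : M ((1:Fin 3),(1:Fin 3)) ((0:Fin 3),(0:Fin 3))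
      = ((1/3:ℝ):ℂ) - ∑ i, a i 1 0 * b i 1 0 := by
    rw [hMe]
    simp only [hx]
    norm_num [hinv]
  have hMtt : M ((1:Fin 3),(1:Fin 3)) ((1:Fin 3),(1:Fin 3))
      = ((1/3:ℝ):ℂ) - ∑ i, a i 1 1 * b i 1 1 := by
    rw [hMe]
    simp only [hx]
    norm_num [hinv]
  -- real/imag facts of entries
  have hima : ∀ i (r : Fin 3), (a i r r).im = 0 := fun i r => by
    rw [(psd_diag (ha i) r).1]; exact Complex.ofReal_im _
  have himb : ∀ i (r : Fin 3), (b i r r).im = 0 := fun i r => by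
    rw [(psd_diag (hb i) r).1]; exact Complex.ofReal_im _
  have reprod : ∀ (z w : ℂ), z.im = 0 → w.im = 0 → (z*w).re = z.re * w.re := by
    intro z w hz hw; rw [Complex.mul_re, hz, hw]; ring
  have resum : ∀ (r r' s s' : Fin 3), (∑ i, a i r r' * b i s s').re
      = ∑ i, (a i r r' * b i s s').re := fun _ _ _ _ => Complex.re_sum _ _
  have rediag : ∀ (r s : Fin 3), (∑ i, a i r r * b i s s).re
      = ∑ i, (a i r r).re * (b i s s).re := by
    intro r s
    rw [resum]
    exact Finset.sum_congr rfl fun i _ => reprod _ _ (hima i r) (himb i s)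
  -- key1
  have key1 : ∑ i, (a i 0 0).re * (b i 1 1).re ≤ ‖M‖ := by
    have q := quad_le M (Pi.single ((0:Fin 3),(1:Fin 3)) (1:ℂ))
    rw [quad_one, sum_sq_one] at q
    simp only [star_one, one_mul, mul_one, norm_one, one_pow] at q
    rw [hM01] at q
    calc ∑ i, (a i 0 0).re * (b i 1 1).re
        = (-(-∑ i, a i 0 0 * b i 1 1)).re := by rw [neg_neg, rediag]
      _ ≤ ‖-(-∑ i, a i 0 0 * b i 1 1)‖ := Complex.re_le_norm _
      _ = ‖-∑ i, a i 0 0 * b i 1 1‖ := by rw [norm_neg]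
      _ ≤ ‖M‖ := q
  have key2 : ∑ i, (a i 1 1).re * (b i 0 0).re ≤ ‖M‖ := by
    have q := quad_le M (Pi.single ((1:Fin 3),(0:Fin 3)) (1:ℂ))
    rw [quad_one, sum_sq_one] at q
    simp only [star_one, one_mul, mul_one, norm_one, one_pow] at q
    rw [hM10] at q
    calc ∑ i, (a i 1 1).re * (b i 0 0).re
        = (-(-∑ i, a i 1 1 * b i 0 0)).re := by rw [neg_neg, rediag]
      _ ≤ ‖-(-∑ i, a i 1 1 * b i 0 0)‖ := Complex.re_le_norm _
      _ = ‖-∑ i, a i 1 1 * b i 0 0‖ := by rw [norm_neg]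
      _ ≤ ‖M‖ := q
  -- conj relation for the anti-diagonal sums
  have hconj : (∑ i, a i 1 0 * b i 1 0) = (starRingEnd ℂ) (∑ i, a i 0 1 * b i 0 1) := by
    rw [map_sum]
    apply Finset.sum_congr rfl
    intro i _
    rw [_root_.map_mul]
    have h1 : a i 1 0 = (starRingEnd ℂ) (a i 0 1) := by
      have := (ha i).1.apply 1 0
      rw [← this]; rfl
    have h2 : b i 1 0 = (starRingEnd ℂ) (b i 0 1) := by
      have := (hb i).1.apply 1 0
      rw [← this]; rfl
    rw [h1, h2]
  have hne : ((0:Fin 3),(0:Fin 3)) ≠ ((1:Fin 3),(1:Fin 3)) := by decide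
  -- key3
  have key3 : (∑ i, (a i 0 0).re * (b i 0 0).re) + (∑ i, (a i 1 1).re * (b i 1 1).re)
      - 2 * ∑ i, (a i 0 1 * b i 0 1).re ≤ 2 * ‖M‖ := by
    have q := quad_le M ((Pi.single ((0:Fin 3),(0:Fin 3)) (1:ℂ) : _ → ℂ)
      + Pi.single ((1:Fin 3),(1:Fin 3)) (-1:ℂ))
    rw [quad_two M hne, sum_sq_two hne] at q
    simp only [star_one, star_neg, norm_one, norm_neg, one_pow] at q
    rw [hMss, hMst, hMts, hMtt, hconj] at q
    have hval : 1 * (((1/3:ℝ):ℂ) - ∑ i, a i 0 0 * b i 0 0) * 1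
        + 1 * (((1/3:ℝ):ℂ) - ∑ i, a i 0 1 * b i 0 1) * (-1)
        + (-1) * (((1/3:ℝ):ℂ) - (starRingEnd ℂ) (∑ i, a i 0 1 * b i 0 1)) * 1
        + (-1) * (((1/3:ℝ):ℂ) - ∑ i, a i 1 1 * b i 1 1) * (-1)
        = -(∑ i, a i 0 0 * b i 0 0) + (∑ i, a i 0 1 * b i 0 1)
          + (starRingEnd ℂ) (∑ i, a i 0 1 * b i 0 1) - ∑ i, a i 1 1 * b i 1 1 := by ring
    rw [hval] at q
    have hre : ((∑ i, a i 0 0 * b i 0 0) - (∑ i, a i 0 1 * b i 0 1)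
        - (starRingEnd ℂ) (∑ i, a i 0 1 * b i 0 1) + ∑ i, a i 1 1 * b i 1 1).re
        = (∑ i, (a i 0 0).re * (b i 0 0).re) + (∑ i, (a i 1 1).re * (b i 1 1).re)
          - 2 * ∑ i, (a i 0 1 * b i 0 1).re := by
      simp only [Complex.sub_re, Complex.add_re, Complex.conj_re, rediag, resum]
      ring
    calc (∑ i, (a i 0 0).re * (b i 0 0).re) + (∑ i, (a i 1 1).re * (b i 1 1).re)
          - 2 * ∑ i, (a i 0 1 * b i 0 1).re
        = ((∑ i, a i 0 0 * b i 0 0) - (∑ i, a i 0 1 * b i 0 1)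
          - (starRingEnd ℂ) (∑ i, a i 0 1 * b i 0 1) + ∑ i, a i 1 1 * b i 1 1).re := hre.symm
      _ ≤ ‖(∑ i, a i 0 0 * b i 0 0) - (∑ i, a i 0 1 * b i 0 1)
          - (starRingEnd ℂ) (∑ i, a i 0 1 * b i 0 1) + ∑ i, a i 1 1 * b i 1 1‖ :=
          Complex.re_le_norm _
      _ = ‖-(∑ i, a i 0 0 * b i 0 0) + (∑ i, a i 0 1 * b i 0 1)
          + (starRingEnd ℂ) (∑ i, a i 0 1 * b i 0 1) - ∑ i, a i 1 1 * b i 1 1‖ := by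
          rw [← norm_neg]
          congr 1
          ring
      _ ≤ ‖M‖ * (1 + 1) := q
      _ = 2 * ‖M‖ := by ring
  -- key4
  have key4 : (4/3 : ℝ) - ((∑ i, (a i 0 0).re * (b i 0 0).re)
      + (∑ i, (a i 1 1).re * (b i 1 1).re) + 2 * ∑ i, (a i 0 1 * b i 0 1).re) ≤ 2 * ‖M‖ := by
    have q := quad_le M ((Pi.single ((0:Fin 3),(0:Fin 3)) (1:ℂ) : _ → ℂ)
      + Pi.single ((1:Fin 3),(1:Fin 3)) (1:ℂ))
    rw [quad_two M hne, sum_sq_two hne] at q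
    simp only [star_one, norm_one, one_pow] at q
    rw [hMss, hMst, hMts, hMtt, hconj] at q
    have hval : 1 * (((1/3:ℝ):ℂ) - ∑ i, a i 0 0 * b i 0 0) * 1
        + 1 * (((1/3:ℝ):ℂ) - ∑ i, a i 0 1 * b i 0 1) * 1
        + 1 * (((1/3:ℝ):ℂ) - (starRingEnd ℂ) (∑ i, a i 0 1 * b i 0 1)) * 1
        + 1 * (((1/3:ℝ):ℂ) - ∑ i, a i 1 1 * b i 1 1) * 1
        = ((4/3:ℝ):ℂ) - (∑ i, a i 0 0 * b i 0 0) - (∑ i, a i 0 1 * b i 0 1)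
          - (starRingEnd ℂ) (∑ i, a i 0 1 * b i 0 1) - ∑ i, a i 1 1 * b i 1 1 := by
      push_cast
      ring
    rw [hval] at q
    have hre : (((4/3:ℝ):ℂ) - (∑ i, a i 0 0 * b i 0 0) - (∑ i, a i 0 1 * b i 0 1)
        - (starRingEnd ℂ) (∑ i, a i 0 1 * b i 0 1) - ∑ i, a i 1 1 * b i 1 1).re
        = (4/3 : ℝ) - ((∑ i, (a i 0 0).re * (b i 0 0).re)
          + (∑ i, (a i 1 1).re * (b i 1 1).re) + 2 * ∑ i, (a i 0 1 * b i 0 1).re) := by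
      simp only [Complex.sub_re, Complex.conj_re, Complex.ofReal_re, rediag, resum]
      ring
    calc (4/3 : ℝ) - ((∑ i, (a i 0 0).re * (b i 0 0).re)
          + (∑ i, (a i 1 1).re * (b i 1 1).re) + 2 * ∑ i, (a i 0 1 * b i 0 1).re)
        = (((4/3:ℝ):ℂ) - (∑ i, a i 0 0 * b i 0 0) - (∑ i, a i 0 1 * b i 0 1)
          - (starRingEnd ℂ) (∑ i, a i 0 1 * b i 0 1) - ∑ i, a i 1 1 * b i 1 1).re := hre.symm
      _ ≤ ‖((4/3:ℝ):ℂ) - (∑ i, a i 0 0 * b i 0 0) - (∑ i, a i 0 1 * b i 0 1)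
          - (starRingEnd ℂ) (∑ i, a i 0 1 * b i 0 1) - ∑ i, a i 1 1 * b i 1 1‖ :=
          Complex.re_le_norm _
      _ = ‖((4/3:ℝ):ℂ) - (∑ i, a i 0 0 * b i 0 0) - (∑ i, a i 0 1 * b i 0 1)
          - (starRingEnd ℂ) (∑ i, a i 0 1 * b i 0 1) - ∑ i, a i 1 1 * b i 1 1‖ :=
          rfl
      _ ≤ ‖M‖ * (1 + 1) := q
      _ = 2 * ‖M‖ := by ring
  -- key5
  have key5 : 2 * ∑ i, (a i 0 1 * b i 0 1).re
      ≤ (∑ i, (a i 0 0).re * (b i 1 1).re) + (∑ i, (a i 1 1).re * (b i 0 0).re) := by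
    rw [Finset.mul_sum, ← Finset.sum_add_distrib]
    apply Finset.sum_le_sum
    intro i _
    have h01 : ((0:Fin 3) : Fin 3) ≠ 1 := by decide
    have hma := psd_minor (ha i) h01
    have hmb := psd_minor (hb i) h01
    have hga := (psd_diag (ha i) 0).2
    have hga' := (psd_diag (ha i) 1).2
    have hgb := (psd_diag (hb i) 0).2
    have hgb' := (psd_diag (hb i) 1).2
    have habs : (a i 0 1 * b i 0 1).re ≤ ‖a i 0 1‖ * ‖b i 0 1‖ := by
      calc (a i 0 1 * b i 0 1).re ≤ ‖a i 0 1 * b i 0 1‖ := Complex.re_le_norm _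
        _ = ‖a i 0 1‖ * ‖b i 0 1‖ := norm_mul _ _
    have hcb := cross_bound (norm_nonneg (a i 0 1)) (norm_nonneg (b i 0 1))
      hga hga' hgb hgb' hma hmb
    linarith
  linarith [key1, key2, key3, key4, key5]
end

section
/- The Cho–Kye–Lee map φ[a,b,c] on M₃(ℂ) defined by φ[a,b,c](x) = ψ[a,b,c](x) − x, where ψ[a,b,c](x) is the diagonal matrix with entries (a x₁₁ + b x₂₂ + c x₃₃, a x₂₂ + b x₃₃ + c x₁₁, a x₃₃ + b x₁₁ + c x₂₂), is completely positive whenever a ≥ 3, b ≥ 0, c ≥ 0. -/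
set_option maxHeartbeats 1000000

open Matrix
open scoped ComplexOrder

/-- The diagonal part of the Cho–Kye–Lee maps on `M₃(ℂ)`. -/
noncomputable def psiCKL (a b c : ℝ) (x : Matrix (Fin 3) (Fin 3) ℂ) :
    Matrix (Fin 3) (Fin 3) ℂ :=
  Matrix.diagonal
    ![(a : ℂ) * x 0 0 + (b : ℂ) * x 1 1 + (c : ℂ) * x 2 2,
      (a : ℂ) * x 1 1 + (b : ℂ) * x 2 2 + (c : ℂ) * x 0 0,
      (a : ℂ) * x 2 2 + (b : ℂ) * x 0 0 + (c : ℂ) * x 1 1]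

/-- The Cho–Kye–Lee map `φ[a,b,c](x) = ψ[a,b,c](x) − x`. -/
noncomputable def phiCKL (a b c : ℝ) (x : Matrix (Fin 3) (Fin 3) ℂ) :
    Matrix (Fin 3) (Fin 3) ℂ :=
  psiCKL a b c x - x

/-- A primitive cube root of unity. -/
noncomputable def cklω : ℂ := ⟨-(1/2), Real.sqrt 3 / 2⟩

lemma cklω_sq : cklω ^ 2 = ⟨-(1/2), -(Real.sqrt 3 / 2)⟩ := by
  have h3 : Real.sqrt 3 * Real.sqrt 3 = 3 := Real.mul_self_sqrt (by norm_num)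
  rw [sq, cklω]
  apply Complex.ext <;> simp [Complex.mul_re, Complex.mul_im] <;> nlinarith [h3]

lemma cklω_cube : cklω ^ 3 = 1 := by
  have h3 : Real.sqrt 3 * Real.sqrt 3 = 3 := Real.mul_self_sqrt (by norm_num)
  have := cklω_sq
  rw [pow_succ, this, cklω]
  apply Complex.ext <;> simp [Complex.mul_re, Complex.mul_im] <;> nlinarith [h3]

lemma cklω_sum : 1 + cklω + cklω ^ 2 = 0 := by
  rw [cklω_sq, cklω]
  apply Complex.ext <;> simp [cklω] <;> norm_num

lemma cklω_star : (starRingEnd ℂ) cklω = cklω ^ 2 := by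
  rw [cklω_sq, cklω]
  apply Complex.ext <;> simp [Complex.ext_iff]

/-- Kraus operators for the Cho–Kye–Lee map. -/
noncomputable def cklK (a b c : ℝ) : Fin 11 → Matrix (Fin 3) (Fin 3) ℂ :=
  ![!![1,0,0; 0,cklω,0; 0,0,cklω^2],
    !![1,0,0; 0,cklω^2,0; 0,0,cklω],
    !![(Real.sqrt (a-3) : ℂ),0,0; 0,0,0; 0,0,0],
    !![0,0,0; 0,(Real.sqrt (a-3) : ℂ),0; 0,0,0],
    !![0,0,0; 0,0,0; 0,0,(Real.sqrt (a-3) : ℂ)],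
    !![0,0,0; (Real.sqrt b : ℂ),0,0; 0,0,0],
    !![0,0,0; 0,0,0; 0,(Real.sqrt b : ℂ),0],
    !![0,0,(Real.sqrt b : ℂ); 0,0,0; 0,0,0],
    !![0,0,0; 0,0,0; (Real.sqrt c : ℂ),0,0],
    !![0,(Real.sqrt c : ℂ),0; 0,0,0; 0,0,0],
    !![0,0,0; 0,0,(Real.sqrt c : ℂ); 0,0,0]]

lemma cklK_decomp (a b c : ℝ) (ha : 3 ≤ a) (hb : 0 ≤ b) (hc : 0 ≤ c)
    (x : Matrix (Fin 3) (Fin 3) ℂ) :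
    phiCKL a b c x = ∑ k : Fin 11, (cklK a b c k)ᴴ * x * cklK a b c k := by
  have hsa : ((Real.sqrt (a-3) : ℂ)) * ((Real.sqrt (a-3) : ℂ)) = (a : ℂ) - 3 := by
    rw [← Complex.ofReal_mul, Real.mul_self_sqrt (by linarith)]
    push_cast; ring
  have hsb : ((Real.sqrt b : ℂ)) * ((Real.sqrt b : ℂ)) = (b : ℂ) := by
    rw [← Complex.ofReal_mul, Real.mul_self_sqrt hb]
  have hsc : ((Real.sqrt c : ℂ)) * ((Real.sqrt c : ℂ)) = (c : ℂ) := by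
    rw [← Complex.ofReal_mul, Real.mul_self_sqrt hc]
  have h3 := cklω_cube
  have hs := cklω_sum
  ext i j
  fin_cases i <;> fin_cases j <;>
    simp [phiCKL, psiCKL, cklK, Fin.sum_univ_succ, Matrix.mul_apply, map_pow,
      cklω_star, Complex.conj_ofReal]
  next => linear_combination -(x 0 0) * hsa - (x 1 1) * hsb - (x 2 2) * hsc
  next => linear_combination -(x 0 1) * hs
  next => linear_combination -(x 0 2) * hs
  next => linear_combination (x 1 0 - x 1 0 * cklω) * h3 - (x 1 0) * cklω * hs
  next => linear_combination -(x 1 1) * hsa - (x 2 2) * hsb - (x 0 0) * hsc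
            - (x 1 1) * (cklω^3 + 2) * h3
  next => linear_combination (x 1 2) * h3 - (x 1 2) * cklω^3 * hs
  next => linear_combination (x 2 0 - x 2 0 * cklω) * h3 - (x 2 0) * cklω * hs
  next => linear_combination (x 2 1) * h3 - (x 2 1) * cklω^3 * hs
  next => linear_combination -(x 2 2) * hsa - (x 0 0) * hsb - (x 1 1) * hsc
            - (x 2 2) * (cklω^3 + 2) * h3

/-- The map `φ[a,b,c]` is completely positive whenever `a ≥ 3`, `b ≥ 0`, `c ≥ 0`:
all matrices `∑ᵢⱼ yᵢ* φ(xᵢ* xⱼ) yⱼ` are positive semidefinite. -/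
theorem phiCKL_completely_positive (a b c : ℝ) (ha : 3 ≤ a) (hb : 0 ≤ b) (hc : 0 ≤ c)
    (k : ℕ) (x y : Fin k → Matrix (Fin 3) (Fin 3) ℂ) :
    (∑ i, ∑ j, (y i)ᴴ * phiCKL a b c ((x i)ᴴ * x j) * y j).PosSemidef := by
  have key : (∑ i, ∑ j, (y i)ᴴ * phiCKL a b c ((x i)ᴴ * x j) * y j)
      = ∑ m : Fin 11, (∑ i, x i * cklK a b c m * y i)ᴴ * (∑ j, x j * cklK a b c m * y j) := by
    simp only [cklK_decomp a b c ha hb hc, Finset.mul_sum, Finset.sum_mul,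
      conjTranspose_sum, conjTranspose_mul]
    simp only [mul_assoc]
    conv_lhs => enter [2, i]; rw [Finset.sum_comm]
    rw [Finset.sum_comm]
    conv_lhs => enter [2, m]; rw [Finset.sum_comm]
  rw [key]
  apply Finset.sum_induction _ _ (fun A B => Matrix.PosSemidef.add) Matrix.PosSemidef.zero
  intro m _
  exact Matrix.posSemidef_conjTranspose_mul_self _
end
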